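/- arXiv:1307.6750 — 4 statements merged into one kernel-verified Lean document; each statement's English description precedes it below -/
import Mathlib

section
/- Let y, z ∈ EP₂ and suppose there exists g ∈ F such that g⁻¹ ∘ y ∘ g = z. Then there exist real numbers L and R such that y(t) = z(t) for all t ∈ (−∞, L] ∪ [R, +∞). -/
noncomputable section

open Filter Topology

/-- A real number is a dyadic rational. -/
def IsDyadic (x : ℝ) : Prop := ∃ m k : ℤ, x = (m : ℝ) * 2 ^ k

/-- `IsPL2 f` says that `f : ℝ → ℝ` is an orientation-preserving piecewise-linear
homeomorphism of the real line, with a discrete set of breakpoints (it is affine on a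
small interval on each side of every point), every breakpoint a dyadic rational, and
every slope an integer power of `2`. -/
def IsPL2 (f : ℝ → ℝ) : Prop :=
  Function.Bijective f ∧ StrictMono f ∧
    ∀ t : ℝ, ∃ (ε : ℝ) (a b : ℤ), 0 < ε ∧
      (∀ s : ℝ, t - ε ≤ s → s ≤ t → f s = f t + (2 : ℝ) ^ a * (s - t)) ∧
      (∀ s : ℝ, t ≤ s → s ≤ t + ε → f s = f t + (2 : ℝ) ^ b * (s - t)) ∧
      (a ≠ b → IsDyadic t)

/-- `EP₂`: elements of `PL₂(ℝ)` which are eventually periodic near `±∞`. -/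
def IsEP2 (f : ℝ → ℝ) : Prop :=
  IsPL2 f ∧ ∃ L R : ℝ, L ≤ R ∧ (∀ t : ℝ, t ≤ L → f (t - 1) = f t - 1) ∧
    (∀ t : ℝ, R ≤ t → f (t + 1) = f t + 1)

/-- Thompson's group `F`, realized inside `EP₂` as the maps which are eventually
integral translations near `±∞`. -/
def IsThompsonF (f : ℝ → ℝ) : Prop :=
  IsEP2 f ∧ ∃ (L R : ℝ) (mneg mpos : ℤ), L ≤ R ∧
    (∀ t : ℝ, t ≤ L → f t = t + (mneg : ℝ)) ∧ (∀ t : ℝ, R ≤ t → f t = t + (mpos : ℝ))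

lemma translate_nat_of_left (f : ℝ → ℝ) (L : ℝ)
    (h : ∀ t : ℝ, t ≤ L → f (t - 1) = f t - 1) :
    ∀ n : ℕ, ∀ t : ℝ, t ≤ L - n → f (t + n) = f t + n := by
  intro n
  induction n with
  | zero => simp
  | succ n ih =>
    intro t ht
    have hn : (0:ℝ) ≤ n := Nat.cast_nonneg n
    push_cast at ht ⊢
    have h1 : t + 1 ≤ L - n := by linarith
    have h2 : f (t + 1) = f t + 1 := by
      have := h (t + 1) (by linarith)
      simp only [add_sub_cancel_right] at this
      linarith
    have h3 := ih (t + 1) (by push_cast; linarith)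
    push_cast at h3
    rw [show t + (n + 1 : ℝ) = (t + 1) + n by ring, h3, h2]
    ring

lemma translate_int_of_left (f : ℝ → ℝ) (L : ℝ)
    (h : ∀ t : ℝ, t ≤ L → f (t - 1) = f t - 1) :
    ∀ m : ℤ, ∀ t : ℝ, t ≤ L - |(m : ℝ)| → f (t + m) = f t + m := by
  intro m t ht
  obtain ⟨n, rfl | rfl⟩ := m.eq_nat_or_neg
  · have hn : (0:ℝ) ≤ n := Nat.cast_nonneg n
    push_cast at ht
    rw [abs_of_nonneg hn] at ht
    have := translate_nat_of_left f L h n t ht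
    push_cast
    push_cast at this
    exact this
  · have hn : (0:ℝ) ≤ n := Nat.cast_nonneg n
    push_cast at ht
    rw [abs_neg, abs_of_nonneg hn] at ht
    have h2 := translate_nat_of_left f L h n (t - n) (by linarith)
    rw [sub_add_cancel] at h2
    push_cast
    push_cast at h2
    rw [show t + -(n:ℝ) = t - n by ring]
    linarith

lemma translate_nat_of_right (f : ℝ → ℝ) (R : ℝ)
    (h : ∀ t : ℝ, R ≤ t → f (t + 1) = f t + 1) :
    ∀ n : ℕ, ∀ t : ℝ, R ≤ t → f (t + n) = f t + n := by
  intro n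
  induction n with
  | zero => simp
  | succ n ih =>
    intro t ht
    have hn : (0:ℝ) ≤ n := Nat.cast_nonneg n
    have h3 := ih t ht
    have h2 := h (t + n) (by linarith)
    push_cast
    rw [show t + ((n:ℝ) + 1) = (t + n) + 1 by ring, h2, h3]
    ring

lemma translate_int_of_right (f : ℝ → ℝ) (R : ℝ)
    (h : ∀ t : ℝ, R ≤ t → f (t + 1) = f t + 1) :
    ∀ m : ℤ, ∀ t : ℝ, R + |(m : ℝ)| ≤ t → f (t + m) = f t + m := by
  intro m t ht
  obtain ⟨n, rfl | rfl⟩ := m.eq_nat_or_neg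
  · have hn : (0:ℝ) ≤ n := Nat.cast_nonneg n
    push_cast at ht
    rw [abs_of_nonneg hn] at ht
    have := translate_nat_of_right f R h n t (by linarith)
    push_cast
    push_cast at this
    exact this
  · have hn : (0:ℝ) ≤ n := Nat.cast_nonneg n
    push_cast at ht
    rw [abs_neg, abs_of_nonneg hn] at ht
    have h2 := translate_nat_of_right f R h n (t - n) (by linarith)
    rw [sub_add_cancel] at h2
    push_cast
    push_cast at h2
    rw [show t + -(n:ℝ) = t - n by ring]
    linarith

/-- If `y, z ∈ EP₂` are conjugate by an element `g` of Thompson's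
group `F`, then `y` and `z` agree near `-∞` and near `+∞`. -/
theorem eq_near_infinity_of_conj (y z g : Equiv.Perm ℝ) (hy : IsEP2 ⇑y) (hz : IsEP2 ⇑z)
    (hg : IsThompsonF ⇑g) (hconj : g⁻¹ * y * g = z) :
    ∃ L R : ℝ, (∀ t : ℝ, t ≤ L → y t = z t) ∧ (∀ t : ℝ, R ≤ t → y t = z t) := by
  obtain ⟨⟨_, hymono, _⟩, Ly, Ry, _, hyL, hyR⟩ := hy
  obtain ⟨_, Lg, Rg, mneg, mpos, _, hgL, hgR⟩ := hg
  obtain ⟨t0, ht0⟩ := y.surjective Lg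
  obtain ⟨t1, ht1⟩ := y.surjective Rg
  have hz' : ∀ t : ℝ, z t = g⁻¹ (y (g t)) := by
    intro t
    rw [← hconj]
    rfl
  refine ⟨min Lg (min (Ly - |(mneg : ℝ)|) t0), max Rg (max (Ry + |(mpos : ℝ)|) t1),
    ?_, ?_⟩
  · intro t ht
    have h1 : t ≤ Lg := le_trans ht (min_le_left _ _)
    have h2 : t ≤ Ly - |(mneg : ℝ)| :=
      le_trans ht (le_trans (min_le_right _ _) (min_le_left _ _))
    have h3 : t ≤ t0 := le_trans ht (le_trans (min_le_right _ _) (min_le_right _ _))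
    have hgt : g t = t + mneg := hgL t h1
    have hyt : y (t + mneg) = y t + mneg := translate_int_of_left _ Ly hyL mneg t h2
    have hytLg : y t ≤ Lg := ht0 ▸ hymono.monotone h3
    have hgyt : g (y t) = y t + mneg := hgL (y t) hytLg
    rw [hz', hgt, hyt, ← hgyt, Equiv.Perm.inv_def, Equiv.symm_apply_apply]
  · intro t ht
    have h1 : Rg ≤ t := le_trans (le_max_left _ _) ht
    have h2 : Ry + |(mpos : ℝ)| ≤ t :=
      le_trans (le_trans (le_max_left _ _) (le_max_right _ _)) ht
    have h3 : t1 ≤ t := le_trans (le_trans (le_max_right _ _) (le_max_right _ _)) ht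
    have hgt : g t = t + mpos := hgR t h1
    have hyt : y (t + mpos) = y t + mpos := translate_int_of_right _ Ry hyR mpos t h2
    have hytRg : Rg ≤ y t := ht1 ▸ hymono.monotone h3
    have hgyt : g (y t) = y t + mpos := hgR (y t) hytRg
    rw [hz', hgt, hyt, ← hgyt, Equiv.Perm.inv_def, Equiv.symm_apply_apply]
end
end

section
/- Let z ∈ EP₂ satisfy z(t) < t for all t ∈ ℝ, and let C_F(z) = {g ∈ F : g ∘ z = z ∘ g}. Then for every g ∈ C_F(z) the limit lim_{t→−∞}(g(t) − t) exists and is an integer, and the map φ_z : C_F(z) → ℤ defined by φ_z(g) = lim_{t→−∞}(g(t) − t) is an injective group homomorphism. The analogous statement holds when z(t) > t for all t ∈ ℝ. -/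
noncomputable section

open Filter Topology

private lemma tendsto_iterate_atBot' (w : ℝ → ℝ) (hw : Continuous w) (hlt : ∀ t, w t < t) (s : ℝ) :
    Tendsto (fun n => w^[n] s) atTop atBot := by
  have hanti : Antitone fun n => w^[n] s := antitone_nat_of_succ_le fun n => by
    simpa [Function.iterate_succ_apply'] using (hlt (w^[n] s)).le
  rcases tendsto_of_antitone hanti with h | ⟨l, hl⟩
  · exact h
  · exfalso
    have h1 : Tendsto (fun n => w^[n+1] s) atTop (𝓝 l) := hl.comp (tendsto_add_atTop_nat 1)
    have h2 : Tendsto (fun n => w (w^[n] s)) atTop (𝓝 (w l)) := (hw.tendsto l).comp hl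
    have : w l = l := tendsto_nhds_unique
      (h2.congr fun n => (Function.iterate_succ_apply' w n s).symm) h1
    exact absurd this (hlt l).ne

private lemma perm_eq_id' (w h : Equiv.Perm ℝ) (hw : Continuous ⇑w) (hlt : ∀ t, w t < t)
    (hcomm : ∀ t, h (w t) = w (h t)) (L : ℝ) (hid : ∀ t, t ≤ L → h t = t) :
    ∀ t, h t = t := by
  intro t
  have iter : ∀ n x, h ((⇑w)^[n] x) = (⇑w)^[n] (h x) := by
    intro n
    induction n with
    | zero => intro x; simp
    | succ k ih =>
      intro x
      rw [Function.iterate_succ_apply, Function.iterate_succ_apply, ih, hcomm]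
  obtain ⟨n, hn⟩ := ((tendsto_iterate_atBot' w hw hlt t).eventually (eventually_le_atBot L)).exists
  have h1 : h ((⇑w)^[n] t) = (⇑w)^[n] t := hid _ hn
  have hinj : Function.Injective ((⇑w)^[n]) := (Equiv.injective w).iterate n
  exact hinj ((iter n t).symm.trans h1)

private lemma cont_of_perm' (z : Equiv.Perm ℝ) (hm : StrictMono ⇑z) : Continuous ⇑z := by
  have : Continuous ⇑(hm.orderIsoOfSurjective _ z.surjective) := OrderIso.continuous _
  simpa using this

private lemma strictMono_inv' (z : Equiv.Perm ℝ) (hm : StrictMono ⇑z) : StrictMono ⇑z⁻¹ := by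
  intro a b hab
  rw [← hm.lt_iff_lt]
  simpa using hab
/-- **Statement 4.** For `z ∈ EP₂` with `z(t) < t` for all `t` (or `z(t) > t` for all
`t`), every element `g` of the centralizer `C_F(z) = {g ∈ F : g ∘ z = z ∘ g}` has an
integer limit `φ_z(g) = lim_{t → -∞} (g(t) - t)`, and `φ_z : C_F(z) → ℤ` is an
injective group homomorphism. -/
theorem centralizer_translation_number (z : Equiv.Perm ℝ) (hz : IsEP2 ⇑z)
    (hside : (∀ t : ℝ, z t < t) ∨ (∀ t : ℝ, t < z t)) :
    (∀ g : Equiv.Perm ℝ, IsThompsonF ⇑g → g * z = z * g →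
      ∃ m : ℤ, Tendsto (fun t : ℝ => g t - t) atBot (𝓝 (m : ℝ))) ∧
    (∀ g₁ g₂ : Equiv.Perm ℝ, ∀ m₁ m₂ : ℤ,
      IsThompsonF ⇑g₁ → IsThompsonF ⇑g₂ → g₁ * z = z * g₁ → g₂ * z = z * g₂ →
      Tendsto (fun t : ℝ => g₁ t - t) atBot (𝓝 (m₁ : ℝ)) →
      Tendsto (fun t : ℝ => g₂ t - t) atBot (𝓝 (m₂ : ℝ)) →
      Tendsto (fun t : ℝ => (g₁ * g₂) t - t) atBot (𝓝 ((m₁ + m₂ : ℤ) : ℝ)) ∧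
        (m₁ = m₂ → g₁ = g₂)) := by
  obtain ⟨⟨hbij, hmono, _⟩, _⟩ := hz
  have hzc : Continuous ⇑z := cont_of_perm' z hmono
  constructor
  · rintro g ⟨_, L, R, mneg, mpos, hLR, hL, hR⟩ _
    refine ⟨mneg, ?_⟩
    have hev : ∀ᶠ t in atBot, (fun _ : ℝ => (mneg : ℝ)) t = g t - t :=
      (eventually_le_atBot L).mono fun t ht => by rw [hL t ht]; ring
    exact Tendsto.congr' hev tendsto_const_nhds
  · intro g₁ g₂ m₁ m₂ hg₁ hg₂ hc₁ hc₂ ht₁ ht₂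
    obtain ⟨_, L₁, R₁, n₁, p₁, _, hL₁, _⟩ := hg₁
    obtain ⟨_, L₂, R₂, n₂, p₂, _, hL₂, _⟩ := hg₂
    have hev₁ : ∀ᶠ t in atBot, (fun _ : ℝ => (n₁ : ℝ)) t = g₁ t - t :=
      (eventually_le_atBot L₁).mono fun t ht => by rw [hL₁ t ht]; ring
    have hev₂ : ∀ᶠ t in atBot, (fun _ : ℝ => (n₂ : ℝ)) t = g₂ t - t :=
      (eventually_le_atBot L₂).mono fun t ht => by rw [hL₂ t ht]; ring
    have e₁ : (n₁ : ℝ) = (m₁ : ℝ) :=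
      tendsto_nhds_unique (Tendsto.congr' hev₁ tendsto_const_nhds) ht₁
    have e₂ : (n₂ : ℝ) = (m₂ : ℝ) :=
      tendsto_nhds_unique (Tendsto.congr' hev₂ tendsto_const_nhds) ht₂
    have hL₁' : ∀ t : ℝ, t ≤ L₁ → g₁ t = t + (m₁ : ℝ) := fun t ht => by rw [hL₁ t ht, e₁]
    have hL₂' : ∀ t : ℝ, t ≤ L₂ → g₂ t = t + (m₂ : ℝ) := fun t ht => by rw [hL₂ t ht, e₂]
    constructor
    · have hev : ∀ᶠ t in atBot, (fun _ : ℝ => ((m₁ + m₂ : ℤ) : ℝ)) t = (g₁ * g₂) t - t := by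
        filter_upwards [eventually_le_atBot L₂, eventually_le_atBot (L₁ - (m₂ : ℝ))] with t h2 h1
        have hgt : g₂ t = t + (m₂ : ℝ) := hL₂' t h2
        have hle : g₂ t ≤ L₁ := by rw [hgt]; linarith
        have : (g₁ * g₂) t = g₁ (g₂ t) := rfl
        rw [this, hL₁' _ hle, hgt]
        push_cast
        ring
      exact Tendsto.congr' hev tendsto_const_nhds
    · intro hm12
      subst hm12
      set h := g₁ * g₂⁻¹ with hh
      have c₁ : Commute g₁ z := hc₁
      have c₂ : Commute g₂ z := hc₂
      have ch : Commute h z := c₁.mul_left c₂.inv_left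
      have hid : ∀ t : ℝ, t ≤ min L₁ L₂ + (m₁ : ℝ) → h t = t := by
        intro t ht
        have h2 : t - (m₁ : ℝ) ≤ L₂ := by
          have := min_le_right L₁ L₂; linarith
        have h1 : t - (m₁ : ℝ) ≤ L₁ := by
          have := min_le_left L₁ L₂; linarith
        have hg2 : g₂ (t - (m₁ : ℝ)) = t := by rw [hL₂' _ h2]; ring
        have hinv : g₂⁻¹ t = t - (m₁ : ℝ) := by
          have := congrArg (⇑g₂⁻¹) hg2
          simpa using this.symm
        have : h t = g₁ (g₂⁻¹ t) := rfl
        rw [this, hinv, hL₁' _ h1]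
        ring
      have hone : ∀ t, h t = t := by
        rcases hside with hs | hs
        · refine perm_eq_id' z h hzc hs (fun t => ?_) _ hid
          have := DFunLike.congr_fun ch t
          simpa [Equiv.Perm.mul_apply] using this
        · have hmi : StrictMono ⇑z⁻¹ := strictMono_inv' z hmono
          refine perm_eq_id' z⁻¹ h (cont_of_perm' z⁻¹ hmi) (fun t => ?_) (fun t => ?_) _ hid
          · have := hs (z⁻¹ t)
            simpa using this
          · have := DFunLike.congr_fun ch.inv_right t
            simpa [Equiv.Perm.mul_apply] using this
      refine Equiv.ext fun t => ?_
      have := hone (g₂ t)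
      simpa [hh, Equiv.Perm.mul_apply] using this
end
end

section
/- Let y, z ∈ R·EP₂ satisfy y ∘ y = id, z ∘ z = id, and y(p) = p = z(p) for some rational number p. Then there exists g ∈ F with g⁻¹ ∘ y ∘ g = z if and only if there exist an integer u and a real number R₀ such that y⁻¹(z(t)) = t + u for all t ≥ R₀. -/
noncomputable section

open Filter Topology

/-- Orientation-reversing piecewise-linear homeomorphisms of `ℝ` with discrete breakpoint
set, dyadic breakpoints, and slopes the negatives of integer powers of `2`. -/
def IsRevPL2 (f : ℝ → ℝ) : Prop :=
  Function.Bijective f ∧ StrictAnti f ∧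
    ∀ t : ℝ, ∃ (ε : ℝ) (a b : ℤ), 0 < ε ∧
      (∀ s : ℝ, t - ε ≤ s → s ≤ t → f s = f t - (2 : ℝ) ^ a * (s - t)) ∧
      (∀ s : ℝ, t ≤ s → s ≤ t + ε → f s = f t - (2 : ℝ) ^ b * (s - t)) ∧
      (a ≠ b → IsDyadic t)

/-- `R·EP₂`: orientation-reversing eventually anti-periodic maps. -/
def IsREP2 (f : ℝ → ℝ) : Prop :=
  IsRevPL2 f ∧ ∃ L R : ℝ, L ≤ R ∧ (∀ t : ℝ, t ≤ L → f (t - 1) = f t + 1) ∧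
    (∀ t : ℝ, R ≤ t → f (t + 1) = f t - 1)


lemma locallyGood_isOpen (P : ℝ → Prop) :
    IsOpen {s : ℝ | ∃ ε > 0, ∀ x, s - ε ≤ x → x ≤ s + ε → P x} := by
  rw [Metric.isOpen_iff]
  rintro s ⟨ε, hε, h⟩
  refine ⟨ε / 2, by linarith, fun s' hs' => ?_⟩
  rw [Metric.mem_ball, Real.dist_eq, abs_lt] at hs'
  exact ⟨ε / 2, by linarith, fun x h1 h2 => h x (by linarith) (by linarith)⟩

lemma locallyGood_self {P : ℝ → Prop} {s : ℝ}
    (h : s ∈ {s : ℝ | ∃ ε > 0, ∀ x, s - ε ≤ x → x ≤ s + ε → P x}) : P s := by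
  obtain ⟨ε, hε, h⟩ := h
  exact h s (by linarith) (by linarith)

lemma two_zpow_pos (k : ℤ) : (0:ℝ) < 2 ^ k := zpow_pos (by norm_num) k

lemma two_zpow_inj {a b : ℤ} (h : (2:ℝ) ^ a = 2 ^ b) : a = b :=
  zpow_right_injective₀ (by norm_num) (by norm_num) h

lemma two_zpow_eq_one {a : ℤ} (h : (2:ℝ) ^ a = 1) : a = 0 :=
  two_zpow_inj (by rw [h, zpow_zero])

/-- Break transfer: if an involution in RevPL2 has a genuine breakpoint at `s`,
then it has one at `f s`, hence `f s` is dyadic. -/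
lemma break_transfer {f : ℝ → ℝ} (hf : IsRevPL2 f) (hinv : ∀ x, f (f x) = x)
    {s ε : ℝ} {a b : ℤ} (hε : 0 < ε)
    (hl : ∀ x, s - ε ≤ x → x ≤ s → f x = f s - 2 ^ a * (x - s))
    (hr : ∀ x, s ≤ x → x ≤ s + ε → f x = f s - 2 ^ b * (x - s))
    (hab : a ≠ b) : IsDyadic (f s) := by
  obtain ⟨ε₂, a₂, b₂, hε₂, hl₂, hr₂, hd₂⟩ := hf.2.2 (f s)
  have hpb := two_zpow_pos b
  have hpa := two_zpow_pos a
  -- right side at s gives a₂ = -b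
  have ha₂ : a₂ = -b := by
    set δ := min ε (ε₂ / 2 ^ b) with hδdef
    have hδ : 0 < δ := lt_min hε (by positivity)
    have hδε : δ ≤ ε := min_le_left _ _
    have hδε₂ : 2 ^ b * δ ≤ ε₂ := by
      rw [← le_div_iff₀' hpb]; exact min_le_right _ _
    have hx : f (s + δ) = f s - 2 ^ b * δ := by
      rw [hr (s + δ) (by linarith) (by linarith)]; ring_nf
    have hff : f (f (s + δ)) = f (f s) - 2 ^ a₂ * (f (s + δ) - f s) := by
      apply hl₂ _ (by rw [hx]; linarith) (by rw [hx]; nlinarith)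
    rw [hinv, hinv, hx] at hff
    have : (2:ℝ) ^ a₂ * 2 ^ b = 1 := by
      have h2 : (2:ℝ) ^ a₂ * (2 ^ b * δ) = δ := by linarith [hff]
      rw [← mul_assoc] at h2
      have := mul_right_cancel₀ (ne_of_gt hδ) (h2.trans (one_mul δ).symm)
      linarith
    have := two_zpow_eq_one (a := a₂ + b) (by rw [zpow_add₀ (by norm_num : (2:ℝ) ≠ 0)]; exact this)
    omega
  -- left side at s gives b₂ = -a
  have hb₂ : b₂ = -a := by
    set δ := min ε (ε₂ / 2 ^ a) with hδdef
    have hδ : 0 < δ := lt_min hε (by positivity)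
    have hδε : δ ≤ ε := min_le_left _ _
    have hδε₂ : 2 ^ a * δ ≤ ε₂ := by
      rw [← le_div_iff₀' hpa]; exact min_le_right _ _
    have hx : f (s - δ) = f s + 2 ^ a * δ := by
      rw [hl (s - δ) (by linarith) (by linarith)]; ring_nf
    have hff : f (f (s - δ)) = f (f s) - 2 ^ b₂ * (f (s - δ) - f s) := by
      apply hr₂ _ (by rw [hx]; nlinarith) (by rw [hx]; linarith)
    rw [hinv, hinv, hx] at hff
    have : (2:ℝ) ^ b₂ * 2 ^ a = 1 := by
      have h2 : (2:ℝ) ^ b₂ * (2 ^ a * δ) = δ := by linarith [hff]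
      rw [← mul_assoc] at h2
      have := mul_right_cancel₀ (ne_of_gt hδ) (h2.trans (one_mul δ).symm)
      linarith
    have := two_zpow_eq_one (a := b₂ + a) (by rw [zpow_add₀ (by norm_num : (2:ℝ) ≠ 0)]; exact this)
    omega
  exact hd₂ (by omega)

namespace IsDyadic
lemma mul_zpow {x : ℝ} (h : IsDyadic x) (j : ℤ) : IsDyadic ((2:ℝ)^j * x) := by
  obtain ⟨m, k, rfl⟩ := h
  exact ⟨m, k + j, by rw [zpow_add₀ (by norm_num : (2:ℝ) ≠ 0)]; ring⟩
lemma neg {x : ℝ} (h : IsDyadic x) : IsDyadic (-x) := by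
  obtain ⟨m, k, rfl⟩ := h
  exact ⟨-m, k, by push_cast; ring⟩
lemma add {x y : ℝ} (hx : IsDyadic x) (hy : IsDyadic y) : IsDyadic (x + y) := by
  obtain ⟨m, k, rfl⟩ := hx
  obtain ⟨n, l, rfl⟩ := hy
  refine ⟨m * 2 ^ (k - min k l).toNat + n * 2 ^ (l - min k l).toNat, min k l, ?_⟩
  have h2 : (2:ℝ) ≠ 0 := by norm_num
  have e1 : ((k - min k l).toNat : ℤ) = k - min k l := Int.toNat_of_nonneg (by omega)
  have e2 : ((l - min k l).toNat : ℤ) = l - min k l := Int.toNat_of_nonneg (by omega)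
  push_cast
  rw [add_mul]
  congr 1
  · rw [mul_assoc, ← zpow_natCast (2:ℝ), e1, ← zpow_add₀ h2]; ring_nf
  · rw [mul_assoc, ← zpow_natCast (2:ℝ), e2, ← zpow_add₀ h2]; ring_nf
lemma sub {x y : ℝ} (hx : IsDyadic x) (hy : IsDyadic y) : IsDyadic (x - y) := by
  simpa [sub_eq_add_neg] using hx.add hy.neg
lemma half {x : ℝ} (h : IsDyadic x) : IsDyadic (x / 2) := by
  have := h.mul_zpow (-1)
  simpa [zpow_neg, div_eq_inv_mul] using this
end IsDyadic

/-- Lemma B: an involution in RevPL2 fixing a non-dyadic point is the reflection. -/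
lemma global_reflection {f : ℝ → ℝ} (hf : IsRevPL2 f) (hinv : ∀ x, f (f x) = x)
    {p : ℝ} (hp : f p = p) (hpd : ¬ IsDyadic p) : ∀ x, f x = 2 * p - x := by
  set S : Set ℝ := {s : ℝ | ∃ ε > 0, ∀ x, s - ε ≤ x → x ≤ s + ε → f x = 2 * p - x} with hSdef
  have hne : (2:ℝ) ≠ 0 := by norm_num
  -- p itself is locally a reflection
  have hpS : p ∈ S := by
    obtain ⟨ε, a, b, hε, hl, hr, hd⟩ := hf.2.2 p
    have hab : a = b := by
      by_contra h
      exact hpd (hd h)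
    have hpb := two_zpow_pos b
    -- show b = 0 using the involution at the fixed point
    have hb0 : b = 0 := by
      set δ := min ε (ε / 2 ^ b) with hδdef
      have hδ : 0 < δ := lt_min hε (by positivity)
      have hδε : δ ≤ ε := min_le_left _ _
      have hδε₂ : 2 ^ b * δ ≤ ε := by
        rw [← le_div_iff₀' hpb]; exact min_le_right _ _
      have hx : f (p + δ) = p - 2 ^ b * δ := by
        rw [hr (p + δ) (by linarith) (by linarith), hp]; ring_nf
      have hff : f (f (p + δ)) = f p - 2 ^ a * (f (p + δ) - p) := by
        apply hl _ (by rw [hx]; linarith) (by rw [hx]; nlinarith)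
      rw [hinv, hx, hp] at hff
      have h2 : (2:ℝ) ^ a * (2 ^ b * δ) = δ := by linarith [hff]
      rw [← mul_assoc, ← zpow_add₀ hne] at h2
      have := mul_right_cancel₀ (ne_of_gt hδ) (h2.trans (one_mul δ).symm)
      have := two_zpow_eq_one this
      omega
    refine ⟨ε, hε, fun x h1 h2 => ?_⟩
    rcases le_total x p with h3 | h3
    · rw [hl x h1 h3, hp, hab, hb0]; ring
    · rw [hr x h3 h2, hp, hb0]; ring
  have hopen : IsOpen S := locallyGood_isOpen _
  have hclosed : IsClosed S := by
    rw [← closure_subset_iff_isClosed]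
    intro s hs
    obtain ⟨ε, a, b, hε, hl, hr, hd⟩ := hf.2.2 s
    obtain ⟨s', hs'S, hs'd⟩ := Metric.mem_closure_iff.mp hs ε hε
    rw [Real.dist_eq, abs_lt] at hs'd
    obtain ⟨ε', hε', h'⟩ := hs'S
    -- key step : f s = 2p - s and the slope on the side of s' is 1
    rcases lt_trichotomy s s' with hss | hss | hss
    · -- s < s' : right side of s overlaps the good interval of s'
      set c := max ((s + s') / 2) (s' - ε') with hcdef
      have hc1 : c < s' := max_lt (by linarith) (by linarith)
      have hc2 : s < c := lt_of_lt_of_le (by linarith) (le_max_left _ _)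
      have hcε : c ≤ s + ε := le_trans (le_of_lt hc1) (by linarith)
      have hfc : f c = 2 * p - c := h' c (le_max_right _ _) (by linarith)
      have hfs' : f s' = 2 * p - s' := h' s' (by linarith) (by linarith)
      have hec : f c = f s - 2 ^ b * (c - s) := hr c (le_of_lt hc2) hcε
      have hes' : f s' = f s - 2 ^ b * (s' - s) := hr s' (le_of_lt hss) (by linarith)
      have hb1 : (2:ℝ) ^ b = 1 := by
        have h4 : 2 ^ b * (s' - c) = s' - c := by
          have := hfc; have := hfs'
          nlinarith [hec, hes']
        have := mul_right_cancel₀ (by linarith : s' - c ≠ 0) (h4.trans (one_mul (s'-c)).symm)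
        linarith
      have hb0 : b = 0 := two_zpow_eq_one hb1
      have hfs : f s = 2 * p - s := by
        rw [hb1] at hes'
        linarith [hfs']
      have hab : a = b := by
        by_contra h
        have h1 := hd h
        have h2 := break_transfer hf hinv hε hl hr h
        rw [hfs] at h2
        exact hpd (by simpa using ((h1.add h2).half))
      refine ⟨ε, hε, fun x h1 h2 => ?_⟩
      rcases le_total x s with h3 | h3
      · rw [hl x h1 h3, hfs, hab, hb0]; ring
      · rw [hr x h3 h2, hfs, hb0]; ring
    · exact hss ▸ ⟨ε', hε', h'⟩
    · -- s' < s : left side of s overlaps the good interval of s'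
      set c := min ((s + s') / 2) (s' + ε') with hcdef
      have hc1 : s' < c := lt_min (by linarith) (by linarith)
      have hc2 : c < s := min_le_left _ _ |>.trans_lt (by linarith)
      have hcε : s - ε ≤ c := le_trans (by linarith) (le_of_lt hc1)
      have hfc : f c = 2 * p - c := h' c (by linarith) (min_le_right _ _ |>.trans (by linarith))
      have hfs' : f s' = 2 * p - s' := h' s' (by linarith) (by linarith)
      have hec : f c = f s - 2 ^ a * (c - s) := hl c hcε (le_of_lt hc2)
      have hes' : f s' = f s - 2 ^ a * (s' - s) := hl s' (by linarith) (by linarith)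
      have ha1 : (2:ℝ) ^ a = 1 := by
        have h4 : 2 ^ a * (c - s') = c - s' := by
          nlinarith [hec, hes', hfc, hfs']
        have := mul_right_cancel₀ (by linarith : c - s' ≠ 0) (h4.trans (one_mul (c-s')).symm)
        linarith
      have ha0 : a = 0 := two_zpow_eq_one ha1
      have hfs : f s = 2 * p - s := by
        rw [ha1] at hes'
        linarith [hfs']
      have hab : a = b := by
        by_contra h
        have h1 := hd h
        have h2 := break_transfer hf hinv hε hl hr h
        rw [hfs] at h2
        exact hpd (by simpa using ((h1.add h2).half))
      refine ⟨ε, hε, fun x h1 h2 => ?_⟩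
      rcases le_total x s with h3 | h3
      · rw [hl x h1 h3, hfs, ha0]; ring
      · rw [hr x h3 h2, hfs, ← hab, ha0]; ring
  have : S = Set.univ := IsClopen.eq_univ ⟨hclosed, hopen⟩ ⟨p, hpS⟩
  intro x
  exact locallyGood_self (P := fun x => f x = 2 * p - x) (show x ∈ S from this ▸ Set.mem_univ x)

lemma dyadic_density {a b : ℝ} (h : a < b) : ∃ d, IsDyadic d ∧ a < d ∧ d < b := by
  obtain ⟨k, hk⟩ := pow_unbounded_of_one_lt (b - a)⁻¹ (by norm_num : (1:ℝ) < 2)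
  have h2k : (0:ℝ) < 2 ^ k := by positivity
  refine ⟨(⌊a * 2 ^ k⌋ + 1) * (2:ℝ) ^ (-(k:ℤ)), ⟨⌊a * 2 ^ k⌋ + 1, -(k:ℤ), by push_cast; ring⟩, ?_, ?_⟩
  · rw [zpow_neg, zpow_natCast, ← div_eq_mul_inv, lt_div_iff₀ h2k]
    linarith [Int.lt_floor_add_one (a * 2 ^ k)]
  · rw [zpow_neg, zpow_natCast, ← div_eq_mul_inv, div_lt_iff₀ h2k]
    have h1 : (⌊a * 2 ^ k⌋ : ℝ) ≤ a * 2 ^ k := Int.floor_le _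
    have h3 : (1:ℝ) < (b - a) * 2 ^ k := by
      have hba : (0:ℝ) < b - a := by linarith
      calc (1:ℝ) = (b-a) * (b-a)⁻¹ := by field_simp
      _ < (b-a) * 2^k := by exact mul_lt_mul_of_pos_left hk hba
    push_cast
    nlinarith

lemma IsDyadic.of_mul_zpow {x : ℝ} (j : ℤ) (h : IsDyadic ((2:ℝ)^j * x)) : IsDyadic x := by
  have := h.mul_zpow (-j)
  rwa [← mul_assoc, ← zpow_add₀ (by norm_num : (2:ℝ) ≠ 0), neg_add_cancel, zpow_zero, one_mul]
    at this

/-- On an affine piece through a dyadic point with dyadic value, dyadicity is preserved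
both ways. -/
lemma dyadic_iff_of_affine {u v x w : ℝ} (k : ℤ) (hu : IsDyadic u) (hv : IsDyadic v)
    (h : w = v - 2 ^ k * (x - u)) : (IsDyadic x ↔ IsDyadic w) := by
  constructor
  · intro hx
    rw [h]
    exact hv.sub ((hx.sub hu).mul_zpow k)
  · intro hw
    have h1 : (2:ℝ) ^ k * (x - u) = v - w := by linarith [h]
    have h2 : IsDyadic ((2:ℝ) ^ k * (x - u)) := h1 ▸ hv.sub hw
    have h3 := h2.of_mul_zpow k
    simpa using h3.add hu

/-- Lemma C: a RevPL2 map carrying one dyadic point to a dyadic point preserves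
dyadicity everywhere. -/
lemma dyadic_preserving {f : ℝ → ℝ} (hf : IsRevPL2 f) {p : ℝ} (hpd : IsDyadic p)
    (hfp : IsDyadic (f p)) : ∀ x, (IsDyadic x ↔ IsDyadic (f x)) := by
  set S : Set ℝ := {s : ℝ | ∃ ε > 0, ∀ x, s - ε ≤ x → x ≤ s + ε →
    (IsDyadic x ↔ IsDyadic (f x))} with hSdef
  have hpS : p ∈ S := by
    obtain ⟨ε, a, b, hε, hl, hr, hd⟩ := hf.2.2 p
    refine ⟨ε, hε, fun x h1 h2 => ?_⟩
    rcases le_total x p with h3 | h3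
    · exact dyadic_iff_of_affine a hpd hfp (hl x h1 h3)
    · exact dyadic_iff_of_affine b hpd hfp (hr x h3 h2)
  have hopen : IsOpen S := locallyGood_isOpen _
  have hclosed : IsClosed S := by
    rw [← closure_subset_iff_isClosed]
    intro s hs
    obtain ⟨ε, a, b, hε, hl, hr, hd⟩ := hf.2.2 s
    obtain ⟨s', hs'S, hs'd⟩ := Metric.mem_closure_iff.mp hs ε hε
    rw [Real.dist_eq, abs_lt] at hs'd
    obtain ⟨ε', hε', h'⟩ := hs'S
    rcases lt_trichotomy s s' with hss | hss | hss
    · -- s < s' : pick a dyadic point x₀ in the overlap, right of s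
      obtain ⟨x₀, hx₀d, hx₀1, hx₀2⟩ := dyadic_density
        (max_lt (by linarith) (by linarith) : max s (s' - ε') < s')
      have hx₀s : s < x₀ := lt_of_le_of_lt (le_max_left _ _) hx₀1
      have hx₀ε : x₀ ≤ s + ε := by linarith
      have hx₀good : IsDyadic (f x₀) :=
        (h' x₀ (le_of_lt (lt_of_le_of_lt (le_max_right _ _) hx₀1)) (by linarith)).mp hx₀d
      have hex₀ : f x₀ = f s - 2 ^ b * (x₀ - s) := hr x₀ (le_of_lt hx₀s) hx₀ε
      refine ⟨ε, hε, fun x h1 h2 => ?_⟩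
      rcases le_total x s with h3 | h3
      · -- left side
        by_cases hsd : IsDyadic s
        · have hfs : IsDyadic (f s) := by
            have : f s = f x₀ + 2 ^ b * (x₀ - s) := by linarith [hex₀]
            rw [this]
            exact hx₀good.add ((hx₀d.sub hsd).mul_zpow b)
          exact dyadic_iff_of_affine a hsd hfs (hl x h1 h3)
        · have hab : a = b := by by_contra h; exact hsd (hd h)
          have hx : f x = f x₀ - 2 ^ b * (x - x₀) := by
            rw [hl x h1 h3, hab]
            linarith [hex₀]
          exact dyadic_iff_of_affine b hx₀d hx₀good hx
      · -- right side : same affine piece as x₀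
        have hx : f x = f x₀ - 2 ^ b * (x - x₀) := by
          rw [hr x h3 h2]
          linarith [hex₀]
        exact dyadic_iff_of_affine b hx₀d hx₀good hx
    · exact hss ▸ ⟨ε', hε', h'⟩
    · -- s' < s : pick a dyadic point x₀ in the overlap, left of s
      obtain ⟨x₀, hx₀d, hx₀1, hx₀2⟩ := dyadic_density
        (lt_min (by linarith) (by linarith) : s' < min s (s' + ε'))
      have hx₀s : x₀ < s := lt_of_lt_of_le hx₀2 (min_le_left _ _)
      have hx₀ε : s - ε ≤ x₀ := by linarith
      have hx₀good : IsDyadic (f x₀) :=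
        (h' x₀ (by linarith) (by have := lt_of_lt_of_le hx₀2 (min_le_right s (s' + ε')); linarith)).mp hx₀d
      have hex₀ : f x₀ = f s - 2 ^ a * (x₀ - s) := hl x₀ hx₀ε (le_of_lt hx₀s)
      refine ⟨ε, hε, fun x h1 h2 => ?_⟩
      rcases le_total x s with h3 | h3
      · have hx : f x = f x₀ - 2 ^ a * (x - x₀) := by
          rw [hl x h1 h3]
          linarith [hex₀]
        exact dyadic_iff_of_affine a hx₀d hx₀good hx
      · by_cases hsd : IsDyadic s
        · have hfs : IsDyadic (f s) := by
            have : f s = f x₀ + 2 ^ a * (x₀ - s) := by linarith [hex₀]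
            rw [this]
            exact hx₀good.add ((hx₀d.sub hsd).mul_zpow a)
          exact dyadic_iff_of_affine b hsd hfs (hr x h3 h2)
        · have hab : a = b := by by_contra h; exact hsd (hd h)
          have hx : f x = f x₀ - 2 ^ a * (x - x₀) := by
            rw [hr x h3 h2, ← hab]
            linarith [hex₀]
          exact dyadic_iff_of_affine a hx₀d hx₀good hx
  have huniv : S = Set.univ := IsClopen.eq_univ ⟨hclosed, hopen⟩ ⟨p, hpS⟩
  intro x
  exact locallyGood_self (P := fun x => (IsDyadic x ↔ IsDyadic (f x)))
    (show x ∈ S from huniv ▸ Set.mem_univ x)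

lemma anti_periodic_nat {y : ℝ → ℝ} {Ry : ℝ} (hyR : ∀ t : ℝ, Ry ≤ t → y (t + 1) = y t - 1) :
    ∀ n : ℕ, ∀ t : ℝ, Ry ≤ t → y (t + n) = y t - n := by
  intro n
  induction n with
  | zero => intro t ht; simp
  | succ n ih =>
    intro t ht
    have h1 : y (t + n + 1) = y (t + n) - 1 := hyR (t + n) (by push_cast; linarith)
    have h2 := ih t ht
    push_cast
    push_cast at h1 h2
    rw [show t + (n + 1 : ℝ) = t + n + 1 by ring, h1, h2]
    ring

lemma anti_periodic_int {y : ℝ → ℝ} {Ry : ℝ} (hyR : ∀ t : ℝ, Ry ≤ t → y (t + 1) = y t - 1) :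
    ∀ m : ℤ, ∀ t : ℝ, Ry ≤ t → Ry ≤ t + m → y (t + m) = y t - m := by
  intro m t ht htm
  rcases le_or_gt 0 m with hm | hm
  · obtain ⟨n, rfl⟩ := Int.eq_ofNat_of_zero_le hm
    have := anti_periodic_nat hyR n t ht
    push_cast at this ⊢
    exact this
  · set n : ℕ := (-m).toNat with hn
    have hn' : (n : ℝ) = -(m : ℝ) := by
      have : ((-m).toNat : ℤ) = -m := Int.toNat_of_nonneg (by omega)
      push_cast at this ⊢
      rw [← hn] at *
      exact_mod_cast this
    have := anti_periodic_nat hyR n (t + m) htm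
    rw [hn'] at this
    have h2 : t + (m:ℝ) + -(m:ℝ) = t := by ring
    rw [h2] at this
    linarith [this]

lemma forward_dir (y z g : Equiv.Perm ℝ) (hy : IsREP2 ⇑y) (hy2 : y * y = 1)
    (hg : IsThompsonF ⇑g) (hc : g⁻¹ * y * g = z) :
    ∃ (u : ℤ) (R₀ : ℝ), ∀ t : ℝ, R₀ ≤ t → y⁻¹ (z t) = t + (u : ℝ) := by
  obtain ⟨⟨hyPL, Ly, Ry, hLyRy, hyL, hyR⟩⟩ : IsREP2 ⇑y ∧ True := ⟨hy, trivial⟩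
  obtain ⟨hEP, L, R, mneg, mpos, hLR, hgL, hgR⟩ := hg
  set u : ℤ := mpos + mneg with hu
  have hanti : StrictAnti ⇑y := hyPL.2.1
  -- g⁻¹ is translation by -mneg near -∞
  have hginv : ∀ s : ℝ, s ≤ L + mneg → g⁻¹ s = s - mneg := by
    intro s hs
    have h1 : g (s - mneg) = s := by
      rw [hgL _ (by linarith)]; ring
    calc g⁻¹ s = g⁻¹ (g (s - mneg)) := by rw [h1]
    _ = s - mneg := Equiv.symm_apply_apply _ _
  -- the threshold
  set B : ℝ := L + mneg + mpos with hB
  set T : ℝ := max R (max (Ry + |(mpos:ℝ)| + |(u:ℝ)|) (y⁻¹ B)) with hT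
  refine ⟨u, T, fun t ht => ?_⟩
  have htR : R ≤ t := le_trans (le_max_left _ _) ht
  have htRy : Ry + |(mpos:ℝ)| + |(u:ℝ)| ≤ t :=
    le_trans (le_trans (le_max_left _ _) (le_max_right _ _)) ht
  have htB : y t ≤ B := by
    have h1 : y⁻¹ B ≤ t := le_trans (le_trans (le_max_right _ _) (le_max_right _ _)) ht
    have h2 := hanti.antitone h1
    rwa [Equiv.Perm.inv_def, Equiv.apply_symm_apply] at h2
  have habs1 : |(mpos:ℝ)| ≥ 0 := abs_nonneg _
  have habs2 : |(u:ℝ)| ≥ 0 := abs_nonneg _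
  have hzt : z t = g⁻¹ (y (g t)) := by
    rw [← hc]; rfl
  have h1 : g t = t + mpos := hgR t htR
  have h2 : y (t + mpos) = y t - mpos := by
    apply anti_periodic_int hyR mpos t
    · linarith
    · have := neg_abs_le (mpos:ℝ); linarith
  have h3 : g⁻¹ (y t - mpos) = y t - mpos - mneg := by
    apply hginv
    linarith [htB]
  have h4 : y (t + u) = y t - u := by
    apply anti_periodic_int hyR u t
    · linarith
    · have := neg_abs_le (u:ℝ); linarith
  have h5 : z t = y (t + u) := by
    rw [hzt, h1, h2, h3, h4, hu]
    push_cast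
    ring
  rw [h5, Equiv.Perm.inv_def, Equiv.symm_apply_apply]

lemma backward_dyadic (y z : Equiv.Perm ℝ) (hy : IsREP2 ⇑y) (hz : IsREP2 ⇑z)
    (hyi : ∀ x : ℝ, y (y x) = x) (hzi : ∀ x : ℝ, z (z x) = x)
    {p : ℝ} (hpd : IsDyadic p) (hyp : y p = p) (hzp : z p = p)
    (u : ℤ) (R₀ : ℝ) (hu : ∀ t : ℝ, R₀ ≤ t → y (z t) = t + (u : ℝ)) :
    ∃ g : Equiv.Perm ℝ, IsThompsonF ⇑g ∧ g⁻¹ * y * g = z := by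
  have hyanti : StrictAnti ⇑y := hy.1.2.1
  have hzanti : StrictAnti ⇑z := hz.1.2.1
  have hzlt : ∀ t : ℝ, p < t → z t < p := fun t ht => by
    have := hzanti ht; rwa [hzp] at this
  have hzgt : ∀ t : ℝ, t < p → p < z t := fun t ht => by
    have := hzanti ht; rwa [hzp] at this
  have hygt : ∀ s : ℝ, s < p → p < y s := fun s hs => by
    have := hyanti hs; rwa [hyp] at this
  set g : Equiv.Perm ℝ :=
    { toFun := fun t => if t ≤ p then t else y (z t)
      invFun := fun t => if t ≤ p then t else z (y t)
      left_inv := by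
        intro t
        by_cases h : t ≤ p
        · simp [h]
        · push_neg at h
          have h1 : ¬ (y (z t) ≤ p) := not_le.mpr (hygt _ (hzlt t h))
          simp only [if_neg (not_le.mpr h)]
          rw [if_neg h1, hyi, hzi]
      right_inv := by
        intro t
        by_cases h : t ≤ p
        · simp [h]
        · push_neg at h
          have hylt : y t < p := by
            have := hyanti h; rwa [hyp] at this
          have h1 : ¬ (z (y t) ≤ p) := not_le.mpr (hzgt _ hylt)
          simp only [if_neg (not_le.mpr h)]
          rw [if_neg h1, hzi, hyi] } with hgdef
  have hga : ∀ t : ℝ, g t = if t ≤ p then t else y (z t) := fun t => rfl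
  have hgp : g p = p := by rw [hga, if_pos le_rfl]
  -- the conjugation identity
  have hcomm : y * g = g * z := by
    ext t
    show y (g t) = g (z t)
    by_cases h : t ≤ p
    · rcases eq_or_lt_of_le h with rfl | h'
      · rw [hgp, hzp, hgp, hyp]
      · have h1 : p < z t := hzgt t h'
        rw [hga t, if_pos h, hga (z t), if_neg (not_le.mpr h1), hzi]
    · push_neg at h
      have h1 : z t < p := hzlt t h
      rw [hga t, if_neg (not_le.mpr h), hga (z t), if_pos (le_of_lt h1), hyi]
  have hconj : g⁻¹ * y * g = z := by
    rw [mul_assoc, hcomm, ← mul_assoc, inv_mul_cancel, one_mul]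
  -- Lemma C for z
  have hCz : ∀ x : ℝ, IsDyadic x ↔ IsDyadic (z x) :=
    dyadic_preserving hz.1 hpd (by rw [hzp]; exact hpd)
  have h2ne : (2:ℝ) ≠ 0 := by norm_num
  -- strict monotonicity
  have hmono : StrictMono ⇑g := by
    intro s t hst
    rw [hga s, hga t]
    by_cases hs : s ≤ p
    · by_cases ht : t ≤ p
      · rw [if_pos hs, if_pos ht]; exact hst
      · push_neg at ht
        rw [if_pos hs, if_neg (not_le.mpr ht)]
        exact lt_of_le_of_lt hs (hygt _ (hzlt t ht))
    · push_neg at hs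
      have ht : p < t := lt_trans hs hst
      rw [if_neg (not_le.mpr hs), if_neg (not_le.mpr ht)]
      exact hyanti (hzanti hst)
  -- piecewise-affine local data
  have hPLdata : ∀ t : ℝ, ∃ (ε : ℝ) (a b : ℤ), 0 < ε ∧
      (∀ s : ℝ, t - ε ≤ s → s ≤ t → g s = g t + (2 : ℝ) ^ a * (s - t)) ∧
      (∀ s : ℝ, t ≤ s → s ≤ t + ε → g s = g t + (2 : ℝ) ^ b * (s - t)) ∧
      (a ≠ b → IsDyadic t) := by
    intro t
    rcases lt_trichotomy t p with htp | heq | htp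
    · refine ⟨p - t, 0, 0, by linarith, ?_, ?_, fun h => absurd rfl h⟩
      · intro s h1 h2
        rw [hga s, hga t, if_pos (by linarith), if_pos (by linarith)]
        rw [zpow_zero]; ring
      · intro s h1 h2
        rw [hga s, hga t, if_pos (by linarith : s ≤ p), if_pos (by linarith)]
        rw [zpow_zero]; ring
    · -- t = p
      subst heq
      obtain ⟨εz, az, bz, hεz, hzl, hzr, hdz⟩ := hz.1.2.2 t
      obtain ⟨εy, ay, by', hεy, hyl, hyr, hdy⟩ := hy.1.2.2 t
      have hb := two_zpow_pos bz
      set ε := min εz (εy / 2 ^ bz) with hε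
      have hε0 : 0 < ε := lt_min hεz (by positivity)
      refine ⟨ε, 0, ay + bz, hε0, ?_, ?_, fun _ => hpd⟩
      · intro s h1 h2
        rw [hga s, hga t, if_pos h2, if_pos le_rfl, zpow_zero]; ring
      · intro s h1 h2
        rcases eq_or_lt_of_le h1 with rfl | h1'
        · rw [hga t, if_pos le_rfl]; ring
        · have hsε : s ≤ t + εz := by
            have : ε ≤ εz := min_le_left _ _; linarith
          have hzs : z s = t - 2 ^ bz * (s - t) := by
            rw [hzr s h1 hsε, hzp]
          have hbound : 2 ^ bz * (s - t) ≤ εy := by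
            have h3 : ε ≤ εy / 2 ^ bz := min_le_right _ _
            have h4 : s - t ≤ εy / 2 ^ bz := by linarith
            calc 2 ^ bz * (s - t) ≤ 2 ^ bz * (εy / 2 ^ bz) :=
                  mul_le_mul_of_nonneg_left h4 (le_of_lt hb)
            _ = εy := by field_simp
          have hys : y (z s) = t + 2 ^ ay * (2 ^ bz * (s - t)) := by
            have h5 : t - εy ≤ z s := by rw [hzs]; linarith
            have h6 : z s ≤ t := by rw [hzs]; nlinarith
            rw [hyl (z s) h5 h6, hyp, hzs]; ring
          rw [hga s, hga t, if_neg (not_le.mpr h1'), if_pos le_rfl, hys,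
            zpow_add₀ h2ne]
          ring
    · -- p < t
      obtain ⟨εz, az, bz, hεz, hzl, hzr, hdz⟩ := hz.1.2.2 t
      obtain ⟨εy, ay, by', hεy, hyl, hyr, hdy⟩ := hy.1.2.2 (z t)
      have hbz := two_zpow_pos bz
      have haz := two_zpow_pos az
      set ε := min ((t - p) / 2) (min εz (min (εy / 2 ^ az) (εy / 2 ^ bz))) with hε
      have hε0 : 0 < ε := by
        apply lt_min (by linarith)
        exact lt_min hεz (lt_min (by positivity) (by positivity))
      have hεz' : ε ≤ εz := le_trans (min_le_right _ _) (min_le_left _ _)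
      have hεa : ε ≤ εy / 2 ^ az :=
        le_trans (min_le_right _ _) (le_trans (min_le_right _ _) (min_le_left _ _))
      have hεb : ε ≤ εy / 2 ^ bz :=
        le_trans (min_le_right _ _) (le_trans (min_le_right _ _) (min_le_right _ _))
      have hεp : ε ≤ (t - p) / 2 := min_le_left _ _
      have hgt : g t = y (z t) := by rw [hga t, if_neg (not_le.mpr htp)]
      refine ⟨ε, by' + az, ay + bz, hε0, ?_, ?_, ?_⟩
      · -- left side
        intro s h1 h2
        have hsp : p < s := by linarith
        have hzs : z s = z t - 2 ^ az * (s - t) := hzl s (by linarith) h2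
        have hbound : 2 ^ az * (t - s) ≤ εy := by
          have h4 : t - s ≤ εy / 2 ^ az := by linarith
          calc 2 ^ az * (t - s) ≤ 2 ^ az * (εy / 2 ^ az) :=
                mul_le_mul_of_nonneg_left h4 (le_of_lt haz)
          _ = εy := by field_simp
        have h5 : z t ≤ z s := by rw [hzs]; nlinarith
        have h6 : z s ≤ z t + εy := by rw [hzs]; nlinarith
        have hys : y (z s) = y (z t) + 2 ^ by' * (2 ^ az * (s - t)) := by
          rw [hyr (z s) h5 h6, hzs]; ring
        rw [hga s, if_neg (not_le.mpr hsp), hgt, hys, zpow_add₀ h2ne]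
        ring
      · -- right side
        intro s h1 h2
        have hsp : p < s := by linarith
        have hzs : z s = z t - 2 ^ bz * (s - t) := hzr s h1 (by linarith)
        have hbound : 2 ^ bz * (s - t) ≤ εy := by
          have h4 : s - t ≤ εy / 2 ^ bz := by linarith
          calc 2 ^ bz * (s - t) ≤ 2 ^ bz * (εy / 2 ^ bz) :=
                mul_le_mul_of_nonneg_left h4 (le_of_lt hbz)
          _ = εy := by field_simp
        have h5 : z t - εy ≤ z s := by rw [hzs]; linarith
        have h6 : z s ≤ z t := by rw [hzs]; nlinarith
        have hys : y (z s) = y (z t) + 2 ^ ay * (2 ^ bz * (s - t)) := by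
          rw [hyl (z s) h5 h6, hzs]; ring
        rw [hga s, if_neg (not_le.mpr hsp), hgt, hys, zpow_add₀ h2ne]
        ring
      · -- dyadic breakpoints
        intro hAB
        by_cases haz' : az = bz
        · have hay : ay ≠ by' := by omega
          exact (hCz t).mpr (hdy hay)
        · exact hdz haz'
  -- eventual translations
  set Rt : ℝ := max p R₀ + 1 with hRt
  have hgtrans : ∀ t : ℝ, Rt ≤ t → g t = t + (u : ℝ) := by
    intro t ht
    have h1 : p < t := by
      have : p ≤ max p R₀ := le_max_left _ _; linarith
    rw [hga t, if_neg (not_le.mpr h1)]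
    exact hu t (by have : R₀ ≤ max p R₀ := le_max_right _ _; linarith)
  have hgid : ∀ t : ℝ, t ≤ p → g t = t := fun t ht => by rw [hga t, if_pos ht]
  refine ⟨g, ⟨⟨⟨g.bijective, hmono, hPLdata⟩, p, Rt, by
      have : p ≤ max p R₀ := le_max_left _ _; linarith, ?_, ?_⟩,
      p, Rt, 0, u, by have : p ≤ max p R₀ := le_max_left _ _; linarith, ?_, ?_⟩, hconj⟩
  · intro t ht
    rw [hgid _ ht, hgid _ (by linarith)]
  · intro t ht
    rw [hgtrans _ ht, hgtrans _ (by linarith)]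
    ring
  · intro t ht
    rw [hgid _ ht]
    norm_num
  · intro t ht
    exact hgtrans t ht


lemma isThompsonF_one : IsThompsonF ⇑(1 : Equiv.Perm ℝ) := by
  have h1 : ⇑(1 : Equiv.Perm ℝ) = id := rfl
  rw [h1]
  refine ⟨⟨⟨Function.bijective_id, strictMono_id, fun t => ⟨1, 0, 0, one_pos, ?_, ?_, fun h => absurd rfl h⟩⟩,
    0, 0, le_rfl, fun t _ => rfl, fun t _ => rfl⟩, 0, 0, 0, 0, le_rfl, ?_, ?_⟩
  · intro s _ _; simp
  · intro s _ _; simp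
  · intro t _; simp
  · intro t _; simp

/-- **Statement 7.** Let `y, z ∈ R·EP₂` be involutions fixing a common rational point
`p`. Then `y` and `z` are conjugate by an element of `F` if and only if `y⁻¹ ∘ z` is
eventually (for large `t`) an integral translation. -/
theorem orientation_reversing_involutions_conj (y z : Equiv.Perm ℝ)
    (hy : IsREP2 ⇑y) (hz : IsREP2 ⇑z)
    (hy2 : y * y = 1) (hz2 : z * z = 1)
    (p : ℚ) (hyp : y (p : ℝ) = (p : ℝ)) (hzp : z (p : ℝ) = (p : ℝ)) :
    (∃ g : Equiv.Perm ℝ, IsThompsonF ⇑g ∧ g⁻¹ * y * g = z) ↔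
      ∃ (u : ℤ) (R₀ : ℝ), ∀ t : ℝ, R₀ ≤ t → y⁻¹ (z t) = t + (u : ℝ) := by
  have hyi : ∀ x : ℝ, y (y x) = x := fun x => by
    have := DFunLike.congr_fun hy2 x
    simpa using this
  have hzi : ∀ x : ℝ, z (z x) = x := fun x => by
    have := DFunLike.congr_fun hz2 x
    simpa using this
  have hyinv : y⁻¹ = y := inv_eq_of_mul_eq_one_left hy2
  constructor
  · rintro ⟨g, hg, hc⟩
    exact forward_dir y z g hy hy2 hg hc
  · rintro ⟨u, R₀, hu⟩
    by_cases hpd : IsDyadic (p : ℝ)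
    · refine backward_dyadic y z hy hz hyi hzi hpd hyp hzp u R₀ (fun t ht => ?_)
      have := hu t ht
      rwa [hyinv] at this
    · have hyr := global_reflection hy.1 hyi hyp hpd
      have hzr := global_reflection hz.1 hzi hzp hpd
      have hyz : y = z := Equiv.ext fun x => by rw [hyr x, hzr x]
      exact ⟨1, isThompsonF_one, by rw [inv_one, one_mul, mul_one, hyz]⟩
end
end

section
/- (Simultaneous transitivity.) Let η < ζ be dyadic rationals and let η < α₁ < ⋯ < α_r < ζ and η < β₁ < ⋯ < β_r < ζ be two finite sequences of rational numbers. Then there exists g ∈ F with g(α_i) = β_i for all i = 1, …, r if and only if for every i = 1, …, r there exists g_i ∈ F with g_i(α_i) = β_i. -/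
noncomputable section

open Filter Topology

open Set

namespace Dy
lemma two_zpow_pos (k : ℤ) : (0:ℝ) < 2 ^ k := zpow_pos two_pos k
lemma zpow_inj {a b : ℤ} (h : (2:ℝ) ^ a = 2 ^ b) : a = b :=
  zpow_right_injective₀ two_pos (by norm_num) h
lemma dyadic_intCast (m : ℤ) : IsDyadic (m : ℝ) := ⟨m, 0, by simp⟩
lemma dyadic_zpow (k : ℤ) : IsDyadic ((2:ℝ) ^ k) := ⟨1, k, by simp⟩
lemma dyadic_neg {x : ℝ} (hx : IsDyadic x) : IsDyadic (-x) := by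
  obtain ⟨m, k, rfl⟩ := hx
  exact ⟨-m, k, by push_cast; ring⟩

lemma dyadic_add {x y : ℝ} (hx : IsDyadic x) (hy : IsDyadic y) : IsDyadic (x + y) := by
  obtain ⟨m, k, rfl⟩ := hx
  obtain ⟨n, l, rfl⟩ := hy
  rcases le_total k l with h | h
  · refine ⟨m + n * 2 ^ (l - k).toNat, k, ?_⟩
    push_cast
    have h2 : ((2:ℝ) ^ (l - k).toNat) = 2 ^ (l - k) := by
      rw [← zpow_natCast]; congr 1; omega
    rw [h2, add_mul, mul_assoc, ← zpow_add₀ (by norm_num : (2:ℝ) ≠ 0), sub_add_cancel]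
  · refine ⟨n + m * 2 ^ (k - l).toNat, l, ?_⟩
    push_cast
    have h2 : ((2:ℝ) ^ (k - l).toNat) = 2 ^ (k - l) := by
      rw [← zpow_natCast]; congr 1; omega
    rw [h2, add_mul, mul_assoc, ← zpow_add₀ (by norm_num : (2:ℝ) ≠ 0), sub_add_cancel]
    ring

lemma dyadic_sub {x y : ℝ} (hx : IsDyadic x) (hy : IsDyadic y) : IsDyadic (x - y) := by
  rw [sub_eq_add_neg]; exact dyadic_add hx (dyadic_neg hy)

lemma dyadic_mul {x y : ℝ} (hx : IsDyadic x) (hy : IsDyadic y) : IsDyadic (x * y) := by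
  obtain ⟨m, k, rfl⟩ := hx
  obtain ⟨n, l, rfl⟩ := hy
  exact ⟨m * n, k + l, by push_cast [zpow_add₀ (by norm_num : (2:ℝ) ≠ 0)]; ring⟩

lemma exists_dyadic_between {a b : ℝ} (h : a < b) : ∃ d : ℝ, IsDyadic d ∧ a < d ∧ d < b := by
  obtain ⟨n, hn⟩ := pow_unbounded_of_one_lt (b - a)⁻¹ (one_lt_two (α := ℝ))
  have h2 : (0:ℝ) < 2 ^ (n:ℤ) := two_zpow_pos _
  have hlt : (2:ℝ) ^ (-(n:ℤ)) < b - a := by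
    rw [zpow_neg]
    rw [inv_lt_comm₀ h2 (by linarith)]
    calc (b-a)⁻¹ < 2 ^ n := hn
    _ = (2:ℝ) ^ (n:ℤ) := by rw [zpow_natCast]
  set e : ℝ := 2 ^ (-(n:ℤ)) with he
  have he0 : 0 < e := two_zpow_pos _
  refine ⟨(⌊a / e⌋ + 1) * e, ⟨⌊a / e⌋ + 1, -(n:ℤ), by push_cast; ring⟩, ?_, ?_⟩
  · have := Int.lt_floor_add_one (a / e)
    calc a = a / e * e := by field_simp
    _ < (⌊a / e⌋ + 1) * e := by
        apply mul_lt_mul_of_pos_right _ he0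
        push_cast; exact this
  · have h1 : (⌊a / e⌋ : ℝ) ≤ a / e := Int.floor_le _
    have : ((⌊a / e⌋ : ℝ) + 1) * e ≤ (a / e) * e + e := by
      rw [add_mul, one_mul]
      have := mul_le_mul_of_nonneg_right h1 he0.le
      linarith
    push_cast
    calc ((⌊a / e⌋ : ℝ) + 1) * e ≤ (a / e) * e + e := this
    _ = a + e := by field_simp
    _ < b := by linarith


lemma zpow_eq_of_mul {c d : ℤ} {w : ℝ} (hw : w ≠ 0) (h : (2:ℝ)^c * w = 2^d * w) : c = d :=
  zpow_inj (mul_right_cancel₀ hw h)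

section LemA
variable {f : ℝ → ℝ}

/-- the invariant set -/
def S (f : ℝ → ℝ) : Set ℝ := {x | ∃ (ε : ℝ) (a b : ℤ), 0 < ε ∧
      (∀ s : ℝ, x - ε ≤ s → s ≤ x → f s = f x + (2 : ℝ) ^ a * (s - x)) ∧
      (∀ s : ℝ, x ≤ s → s ≤ x + ε → f s = f x + (2 : ℝ) ^ b * (s - x)) ∧
      (a ≠ b → IsDyadic x) ∧ IsDyadic (f x - 2 ^ a * x) ∧ IsDyadic (f x - 2 ^ b * x)}

lemma transfer_right {x ε : ℝ} {b : ℤ} (hε : 0 < ε)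
    (hR : ∀ s : ℝ, x ≤ s → s ≤ x + ε → f s = f x + (2 : ℝ) ^ b * (s - x))
    {s : ℝ} (h1 : x < s) (h2 : s < x + ε) :
    (∃ ε' > 0, (∀ u, s - ε' ≤ u → u ≤ s → f u = f s + 2^b*(u-s)) ∧
      (∀ u, s ≤ u → u ≤ s + ε' → f u = f s + 2^b*(u-s))) ∧
      f s - 2^b*s = f x - 2^b*x := by
  have hfs : f s = f x + 2^b*(s-x) := hR s h1.le h2.le
  refine ⟨⟨min (s - x) (x + ε - s), lt_min (by linarith) (by linarith), ?_, ?_⟩, by rw [hfs]; ring⟩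
  · intro u hu1 hu2
    have h3 : min (s - x) (x + ε - s) ≤ s - x := min_le_left _ _
    have hfu : f u = f x + 2^b*(u-x) := hR u (by linarith) (by linarith)
    rw [hfu, hfs]; ring
  · intro u hu1 hu2
    have h3 : min (s - x) (x + ε - s) ≤ x + ε - s := min_le_right _ _
    have hfu : f u = f x + 2^b*(u-x) := hR u (by linarith) (by linarith)
    rw [hfu, hfs]; ring

lemma transfer_left {x ε : ℝ} {a : ℤ} (hε : 0 < ε)
    (hL : ∀ s : ℝ, x - ε ≤ s → s ≤ x → f s = f x + (2 : ℝ) ^ a * (s - x))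
    {s : ℝ} (h1 : x - ε < s) (h2 : s < x) :
    (∃ ε' > 0, (∀ u, s - ε' ≤ u → u ≤ s → f u = f s + 2^a*(u-s)) ∧
      (∀ u, s ≤ u → u ≤ s + ε' → f u = f s + 2^a*(u-s))) ∧
      f s - 2^a*s = f x - 2^a*x := by
  have hfs : f s = f x + 2^a*(s-x) := hL s h1.le h2.le
  refine ⟨⟨min (x - s) (s - (x - ε)), lt_min (by linarith) (by linarith), ?_, ?_⟩, by rw [hfs]; ring⟩
  · intro u hu1 hu2
    have h3 : min (x - s) (s - (x - ε)) ≤ s - (x - ε) := min_le_right _ _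
    have hfu : f u = f x + 2^a*(u-x) := hL u (by linarith) (by linarith)
    rw [hfu, hfs]; ring
  · intro u hu1 hu2
    have h3 : min (x - s) (s - (x - ε)) ≤ x - s := min_le_left _ _
    have hfu : f u = f x + 2^a*(u-x) := hL u (by linarith) (by linarith)
    rw [hfu, hfs]; ring

theorem orbit_form (hf : IsThompsonF f) (x : ℝ) :
    ∃ (b : ℤ) (d : ℝ), IsDyadic d ∧ f x = 2 ^ b * x + d := by
  obtain ⟨⟨⟨hbij, hmono, hloc⟩, -⟩, L, R, mneg, mpos, hLR, hNeg, hPos⟩ := hf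
  have hopen : IsOpen (S f) := by
    rw [isOpen_iff_mem_nhds]
    rintro x ⟨ε, a, b, hε, hLc, hRc, hdy, hda, hdb⟩
    filter_upwards [Ioo_mem_nhds (by linarith : x - ε < x) (by linarith : x < x + ε)]
      with s hs
    rcases lt_trichotomy s x with h | h | h
    · obtain ⟨⟨ε', hε', hl, hr⟩, hconst⟩ := transfer_left hε hLc hs.1 h
      exact ⟨ε', a, a, hε', hl, hr, fun h => absurd rfl h, by rw [hconst]; exact hda,
        by rw [hconst]; exact hda⟩
    · subst h; exact ⟨ε, a, b, hε, hLc, hRc, hdy, hda, hdb⟩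
    · obtain ⟨⟨ε', hε', hl, hr⟩, hconst⟩ := transfer_right hε hRc h hs.2
      exact ⟨ε', b, b, hε', hl, hr, fun h => absurd rfl h, by rw [hconst]; exact hdb,
        by rw [hconst]; exact hdb⟩
  have hclosed : IsClosed (S f) := by
    rw [← isOpen_compl_iff, isOpen_iff_mem_nhds]
    intro x hx
    obtain ⟨ε, a, b, hε, hLc, hRc, hdy⟩ := hloc x
    filter_upwards [Ioo_mem_nhds (by linarith : x - ε < x) (by linarith : x < x + ε)]
      with s hs hsS
    apply hx
    obtain ⟨εs, as, bs, hεs, hLs, hRs, hdys, hdas, hdbs⟩ := hsS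
    rcases lt_trichotomy s x with h | h | h
    · -- s left of x ; slope a region; bs = a
      obtain ⟨⟨ε', hε', hl, hr⟩, hconst⟩ := transfer_left hε hLc hs.1 h
      have hm : 0 < min ε' εs := lt_min hε' hεs
      set u := s + min ε' εs with hu
      have hu1 : s < u := by simp only [hu]; linarith
      have e1 : f u = f s + 2^a*(u-s) := hr u hu1.le (by simp only [hu]; linarith [min_le_left ε' εs])
      have e2 : f u = f s + 2^bs*(u-s) := hRs u hu1.le (by simp only [hu]; linarith [min_le_right ε' εs])
      have hba : bs = a := zpow_eq_of_mul (sub_ne_zero.2 hu1.ne') (by linarith)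
      rw [hba] at hdbs
      have hdxa : IsDyadic (f x - 2^a*x) := by rw [← hconst]; exact hdbs
      refine ⟨ε, a, b, hε, hLc, hRc, hdy, hdxa, ?_⟩
      rcases eq_or_ne a b with rfl | hab
      · exact hdxa
      · have hxd := hdy hab
        have : f x - 2^b*x = (f x - 2^a*x) + (2^a - 2^b)*x := by ring
        rw [this]
        exact dyadic_add hdxa (dyadic_mul (dyadic_sub (dyadic_zpow a) (dyadic_zpow b)) hxd)
    · exact h ▸ (⟨εs, as, bs, hεs, hLs, hRs, hdys, hdas, hdbs⟩ : s ∈ S f)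
    · obtain ⟨⟨ε', hε', hl, hr⟩, hconst⟩ := transfer_right hε hRc h hs.2
      have hm : 0 < min ε' εs := lt_min hε' hεs
      set u := s - min ε' εs with hu
      have hu1 : u < s := by simp only [hu]; linarith
      have e1 : f u = f s + 2^b*(u-s) := hl u (by simp only [hu]; linarith [min_le_left ε' εs]) hu1.le
      have e2 : f u = f s + 2^as*(u-s) := hLs u (by simp only [hu]; linarith [min_le_right ε' εs]) hu1.le
      have hba : as = b := zpow_eq_of_mul (sub_ne_zero.2 hu1.ne) (by linarith)
      rw [hba] at hdas
      have hdxb : IsDyadic (f x - 2^b*x) := by rw [← hconst]; exact hdas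
      refine ⟨ε, a, b, hε, hLc, hRc, hdy, ?_, hdxb⟩
      rcases eq_or_ne a b with rfl | hab
      · exact hdxb
      · have hxd := hdy hab
        have : f x - 2^a*x = (f x - 2^b*x) + (2^b - 2^a)*x := by ring
        rw [this]
        exact dyadic_add hdxb (dyadic_mul (dyadic_sub (dyadic_zpow b) (dyadic_zpow a)) hxd)
  have hne : (S f).Nonempty := by
    refine ⟨L - 2, ?_⟩
    obtain ⟨ε, a, b, hε, hLc, hRc, hdy⟩ := hloc (L - 2)
    set x := L - 2 with hxdef
    set δ := min ε 1 with hδ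
    have hδ0 : 0 < δ := by positivity
    have hδ1 : δ ≤ 1 := min_le_right _ _
    have hδε : δ ≤ ε := min_le_left _ _
    have hfx : f x = x + mneg := hNeg x (by linarith)
    have hb0 : b = 0 := by
      have h1 : f (x + δ) = f x + 2^b * δ := by
        have := hRc (x + δ) (by linarith) (by linarith); rw [this]; ring_nf
      have h2 : f (x + δ) = (x + δ) + mneg := hNeg _ (by linarith)
      have : (2:ℝ)^b * δ = 2^(0:ℤ) * δ := by rw [zpow_zero]; rw [hfx] at h1; linarith
      exact zpow_eq_of_mul (ne_of_gt hδ0) this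
    have ha0 : a = 0 := by
      have h1 : f (x - δ) = f x + 2^a * (-δ) := by
        have := hLc (x - δ) (by linarith) (by linarith); rw [this]; ring_nf
      have h2 : f (x - δ) = (x - δ) + mneg := hNeg _ (by linarith)
      have : (2:ℝ)^a * (-δ) = 2^(0:ℤ) * (-δ) := by rw [zpow_zero]; rw [hfx] at h1; linarith
      exact zpow_eq_of_mul (by intro hc; apply hδ0.ne'; linarith) this
    subst ha0 hb0
    have hdc : IsDyadic (f x - 2^(0:ℤ)*x) := by
      rw [zpow_zero, one_mul, hfx]
      have : x + (mneg:ℝ) - x = (mneg:ℝ) := by ring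
      rw [this]; exact dyadic_intCast mneg
    exact ⟨ε, 0, 0, hε, hLc, hRc, fun h => absurd rfl h, hdc, hdc⟩
  have huniv : S f = univ := IsClopen.eq_univ ⟨hclosed, hopen⟩ hne
  have hxS : x ∈ S f := huniv ▸ mem_univ x
  obtain ⟨ε, a, b, hε, hLc, hRc, hdy, hda, hdb⟩ := hxS
  exact ⟨b, f x - 2^b*x, hdb, by ring⟩

end LemA
end Dy

namespace Dy

/-- the orbit relation -/
def Rel (x y : ℝ) : Prop := ∃ (a : ℤ) (d : ℝ), IsDyadic d ∧ y = 2 ^ a * x + d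

lemma Rel.refl (x : ℝ) : Rel x x := ⟨0, 0, ⟨0, 0, by norm_num⟩, by norm_num⟩

lemma Rel.symm {x y : ℝ} (h : Rel x y) : Rel y x := by
  obtain ⟨a, d, hd, rfl⟩ := h
  refine ⟨-a, -(2^(-a) * d), dyadic_neg (dyadic_mul (dyadic_zpow _) hd), ?_⟩
  have h2 : (2:ℝ)^a ≠ 0 := ne_of_gt (two_zpow_pos a)
  rw [zpow_neg]
  field_simp; ring

lemma Rel.trans {x y z : ℝ} (h1 : Rel x y) (h2 : Rel y z) : Rel x z := by
  obtain ⟨a, d, hd, rfl⟩ := h1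
  obtain ⟨b, e, he, rfl⟩ := h2
  exact ⟨b + a, 2^b * d + e, dyadic_add (dyadic_mul (dyadic_zpow _) hd) he,
    by rw [zpow_add₀ (by norm_num : (2:ℝ) ≠ 0)]; ring⟩

lemma rel_apply {f : ℝ → ℝ} (hf : IsThompsonF f) (x : ℝ) : Rel x (f x) := by
  obtain ⟨b, d, hd, h⟩ := orbit_form hf x
  exact ⟨b, d, hd, h⟩

lemma dyadic_of_apply_dyadic {f : ℝ → ℝ} (hf : IsThompsonF f) {x : ℝ}
    (h : IsDyadic (f x)) : IsDyadic x := by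
  obtain ⟨b, d, hd, hfx⟩ := orbit_form hf x
  have : x = 2^(-b) * (f x - d) := by
    have h2 : (2:ℝ)^b ≠ 0 := ne_of_gt (two_zpow_pos b)
    rw [hfx, zpow_neg]
    field_simp; ring
  rw [this]
  exact dyadic_mul (dyadic_zpow _) (dyadic_sub h hd)

/-- build membership in F from PL2 + eventual translations -/
lemma mk_thompson {f : ℝ → ℝ} (hpl : IsPL2 f)
    (hneg : ∃ (L : ℝ) (m : ℤ), ∀ t : ℝ, t ≤ L → f t = t + (m : ℝ))
    (hpos : ∃ (R : ℝ) (m : ℤ), ∀ t : ℝ, R ≤ t → f t = t + (m : ℝ)) :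
    IsThompsonF f := by
  obtain ⟨L, mneg, hL⟩ := hneg
  obtain ⟨R, mpos, hR⟩ := hpos
  refine ⟨⟨hpl, min L R, max L R, le_trans (min_le_left _ _) (le_max_left _ _), ?_, ?_⟩,
    min L R, max L R, mneg, mpos, le_trans (min_le_left _ _) (le_max_left _ _), ?_, ?_⟩
  · intro t ht
    have h1 : t ≤ L := le_trans ht (min_le_left _ _)
    rw [hL _ h1, hL _ (by linarith)]; ring
  · intro t ht
    have h1 : R ≤ t := le_trans (le_max_right _ _) ht
    rw [hR _ h1, hR _ (by linarith)]; ring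
  · intro t ht; exact hL _ (le_trans ht (min_le_left _ _))
  · intro t ht; exact hR _ (le_trans (le_max_right _ _) ht)

lemma id_thompson : IsThompsonF (fun x : ℝ => x) := by
  refine mk_thompson ⟨Function.bijective_id, strictMono_id, ?_⟩
    ⟨0, 0, fun t _ => by norm_num⟩ ⟨0, 0, fun t _ => by norm_num⟩
  intro t
  exact ⟨1, 0, 0, one_pos, fun s _ _ => by norm_num, fun s _ _ => by norm_num,
    fun h => absurd rfl h⟩

lemma comp_thompson {f g : ℝ → ℝ} (hf : IsThompsonF f) (hg : IsThompsonF g) :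
    IsThompsonF (f ∘ g) := by
  obtain ⟨⟨⟨hfbij, hfmono, hfloc⟩, -⟩, Lf, Rf, mf, Mf, hLRf, hLf, hRf⟩ := hf
  obtain ⟨⟨⟨hgbij, hgmono, hgloc⟩, -⟩, Lg, Rg, mg, Mg, hLRg, hLg, hRg⟩ := hg
  have hfT : IsThompsonF f := ⟨⟨⟨hfbij, hfmono, hfloc⟩, Lf, Rf, hLRf,
      fun t ht => by rw [hLf _ (by linarith), hLf _ ht]; ring,
      fun t ht => by rw [hRf _ (by linarith), hRf _ ht]; ring⟩,
    Lf, Rf, mf, Mf, hLRf, hLf, hRf⟩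
  have hgT : IsThompsonF g := ⟨⟨⟨hgbij, hgmono, hgloc⟩, Lg, Rg, hLRg,
      fun t ht => by rw [hLg _ (by linarith), hLg _ ht]; ring,
      fun t ht => by rw [hRg _ (by linarith), hRg _ ht]; ring⟩,
    Lg, Rg, mg, Mg, hLRg, hLg, hRg⟩
  refine mk_thompson ⟨hfbij.comp hgbij, hfmono.comp hgmono, ?_⟩
    ⟨min Lg (Lf - mg), mg + mf, ?_⟩ ⟨max Rg (Rf - Mg), Mg + Mf, ?_⟩
  · intro t
    obtain ⟨ε₁, a₁, b₁, hε₁, hL₁, hR₁, hd₁⟩ := hgloc t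
    obtain ⟨ε₂, a₂, b₂, hε₂, hL₂, hR₂, hd₂⟩ := hfloc (g t)
    refine ⟨min ε₁ (min (2^(-a₁) * ε₂) (2^(-b₁) * ε₂)), a₁ + a₂, b₁ + b₂,
      lt_min hε₁ (lt_min (by positivity) (by positivity)), ?_, ?_, ?_⟩
    · intro s hs1 hs2
      set ε := min ε₁ (min (2^(-a₁) * ε₂) (2^(-b₁) * ε₂)) with hε
      have h1 : ε ≤ ε₁ := min_le_left _ _
      have h2 : ε ≤ 2^(-a₁) * ε₂ := le_trans (min_le_right _ _) (min_le_left _ _)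
      have hgs : g s = g t + 2^a₁ * (s - t) := hL₁ s (by linarith) hs2
      have hub : g t - ε₂ ≤ g s := by
        rw [hgs]
        have : 2^a₁ * (t - s) ≤ 2^a₁ * ε := by
          apply mul_le_mul_of_nonneg_left _ (two_zpow_pos a₁).le
          linarith
        have h3 : 2^a₁ * ε ≤ ε₂ := by
          have := mul_le_mul_of_nonneg_left h2 (two_zpow_pos a₁).le
          rw [← mul_assoc, ← zpow_add₀ (by norm_num : (2:ℝ) ≠ 0)] at this
          simpa using this
        nlinarith
      have hub2 : g s ≤ g t := by
        rw [hgs]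
        nlinarith [two_zpow_pos a₁]
      have := hL₂ (g s) hub hub2
      simp only [Function.comp_apply]
      rw [this, hgs]
      rw [zpow_add₀ (by norm_num : (2:ℝ) ≠ 0)]
      ring
    · intro s hs1 hs2
      set ε := min ε₁ (min (2^(-a₁) * ε₂) (2^(-b₁) * ε₂)) with hε
      have h1 : ε ≤ ε₁ := min_le_left _ _
      have h2 : ε ≤ 2^(-b₁) * ε₂ := le_trans (min_le_right _ _) (min_le_right _ _)
      have hgs : g s = g t + 2^b₁ * (s - t) := hR₁ s hs1 (by linarith)
      have hub : g s ≤ g t + ε₂ := by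
        rw [hgs]
        have : 2^b₁ * (s - t) ≤ 2^b₁ * ε := by
          apply mul_le_mul_of_nonneg_left _ (two_zpow_pos b₁).le
          linarith
        have h3 : 2^b₁ * ε ≤ ε₂ := by
          have := mul_le_mul_of_nonneg_left h2 (two_zpow_pos b₁).le
          rw [← mul_assoc, ← zpow_add₀ (by norm_num : (2:ℝ) ≠ 0)] at this
          simpa using this
        nlinarith
      have hub2 : g t ≤ g s := by
        rw [hgs]
        nlinarith [two_zpow_pos b₁]
      have := hR₂ (g s) hub2 hub
      simp only [Function.comp_apply]
      rw [this, hgs]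
      rw [zpow_add₀ (by norm_num : (2:ℝ) ≠ 0)]
      ring
    · intro hne
      rcases eq_or_ne a₁ b₁ with rfl | h₁
      · have h₂ : a₂ ≠ b₂ := by
          intro h; apply hne; rw [h]
        exact dyadic_of_apply_dyadic hgT (hd₂ h₂)
      · exact hd₁ h₁
  · intro t ht
    have h1 : t ≤ Lg := le_trans ht (min_le_left _ _)
    have h2 : t ≤ Lf - mg := le_trans ht (min_le_right _ _)
    simp only [Function.comp_apply]
    rw [hLg _ h1, hLf _ (by push_cast; linarith)]
    push_cast; ring
  · intro t ht
    have h1 : Rg ≤ t := le_trans (le_max_left _ _) ht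
    have h2 : Rf - Mg ≤ t := le_trans (le_max_right _ _) ht
    simp only [Function.comp_apply]
    rw [hRg _ h1, hRf _ (by push_cast; linarith)]
    push_cast; ring

end Dy

namespace Dy

lemma inv_thompson {f : ℝ → ℝ} (hf : IsThompsonF f) :
    ∃ g : ℝ → ℝ, IsThompsonF g ∧ (∀ x, g (f x) = x) ∧ (∀ y, f (g y) = y) := by
  obtain ⟨⟨⟨hbij, hmono, hloc⟩, -⟩, L, R, mneg, mpos, hLR, hNeg, hPos⟩ := hf
  have hfT : IsThompsonF f := ⟨⟨⟨hbij, hmono, hloc⟩, L, R, hLR,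
      fun t ht => by rw [hNeg _ (by linarith), hNeg _ ht]; ring,
      fun t ht => by rw [hPos _ (by linarith), hPos _ ht]; ring⟩,
    L, R, mneg, mpos, hLR, hNeg, hPos⟩
  set g := Function.invFun f with hg
  have hli : Function.LeftInverse g f := Function.leftInverse_invFun hbij.1
  have hri : Function.RightInverse g f := Function.rightInverse_invFun hbij.2
  have hgmono : StrictMono g := by
    intro y1 y2 hy
    by_contra hc
    push_neg at hc
    have := hmono.monotone hc
    rw [hri y1, hri y2] at this
    exact absurd this (not_le.mpr hy)
  refine ⟨g, mk_thompson ⟨⟨hri.injective, hli.surjective⟩, hgmono, ?_⟩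
    ⟨L + mneg, -mneg, ?_⟩ ⟨R + mpos, -mpos, ?_⟩, hli, hri⟩
  · intro y
    set t := g y with ht
    have hft : f t = y := hri y
    obtain ⟨ε, a, b, hε, hLc, hRc, hdy⟩ := hloc t
    refine ⟨min (2^a * ε) (2^b * ε), -a, -b, lt_min (by positivity) (by positivity),
      ?_, ?_, ?_⟩
    · intro s hs1 hs2
      set u := t + 2^(-a) * (s - y) with hu
      have e1 : (2:ℝ)^a * 2^(-a) = 1 := by
        rw [← zpow_add₀ (by norm_num : (2:ℝ) ≠ 0)]; norm_num
      have hua : 2^a * (u - t) = s - y := by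
        rw [hu]; linear_combination (s - y) * e1
      have hu1 : t - ε ≤ u := by
        have h1 : min (2^a * ε) (2^b * ε) ≤ 2^a * ε := min_le_left _ _
        have h2 : y - 2^a * ε ≤ s := by linarith
        nlinarith [two_zpow_pos a, two_zpow_pos (-a),
          mul_le_mul_of_nonneg_left (by linarith : -(2^a*ε) ≤ s - y) (two_zpow_pos (-a)).le,
          (by rw [← zpow_add₀ (by norm_num : (2:ℝ) ≠ 0)]; norm_num :
            (2:ℝ)^(-a) * 2^a = 1)]
      have hu2 : u ≤ t := by
        have : (2:ℝ)^(-a) * (s - y) ≤ 0 :=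
          mul_nonpos_of_nonneg_of_nonpos (two_zpow_pos (-a)).le (by linarith)
        rw [hu]; linarith
      have hfu : f u = y + (s - y) := by
        rw [hLc u hu1 hu2, hft, hua]
      have : f u = s := by rw [hfu]; ring
      have : g s = u := by rw [← this, hli u]
      exact this
    · intro s hs1 hs2
      set u := t + 2^(-b) * (s - y) with hu
      have e1 : (2:ℝ)^b * 2^(-b) = 1 := by
        rw [← zpow_add₀ (by norm_num : (2:ℝ) ≠ 0)]; norm_num
      have hua : 2^b * (u - t) = s - y := by
        rw [hu]; linear_combination (s - y) * e1
      have hu1 : t ≤ u := by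
        have : (0:ℝ) ≤ 2^(-b) * (s - y) :=
          mul_nonneg (two_zpow_pos (-b)).le (by linarith)
        rw [hu]; linarith
      have hu2 : u ≤ t + ε := by
        have h1 : min (2^a * ε) (2^b * ε) ≤ 2^b * ε := min_le_right _ _
        nlinarith [two_zpow_pos b, two_zpow_pos (-b),
          mul_le_mul_of_nonneg_left (by linarith : s - y ≤ 2^b*ε) (two_zpow_pos (-b)).le,
          (by rw [← zpow_add₀ (by norm_num : (2:ℝ) ≠ 0)]; norm_num :
            (2:ℝ)^(-b) * 2^b = 1)]
      have hfu : f u = y + (s - y) := by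
        rw [hRc u hu1 hu2, hft, hua]
      have : f u = s := by rw [hfu]; ring
      have : g s = u := by rw [← this, hli u]
      exact this
    · intro hne
      have hab : a ≠ b := by intro h; exact hne (by rw [h])
      have htd : IsDyadic t := hdy hab
      rw [← hft]
      obtain ⟨c, d, hd, hform⟩ := orbit_form hfT t
      rw [hform]
      exact dyadic_add (dyadic_mul (dyadic_zpow _) htd) hd
  · intro y hy
    have h1 : y - mneg ≤ L := by push_cast; linarith
    have : f (y - mneg) = y := by rw [hNeg _ h1]; ring
    have h2 : g y = y - (mneg:ℝ) := by
      conv_lhs => rw [← this]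
      exact hli _
    rw [h2]; push_cast; ring
  · intro y hy
    have h1 : R ≤ y - mpos := by push_cast; linarith
    have : f (y - mpos) = y := by rw [hPos _ h1]; ring
    have h2 : g y = y - (mpos:ℝ) := by
      conv_lhs => rw [← this]
      exact hli _
    rw [h2]; push_cast; ring

end Dy

namespace Dy
open Set

lemma smOn_Iic_glue {f : ℝ → ℝ} {a b : ℝ}
    (h1 : StrictMonoOn f (Iic a)) (h2 : StrictMonoOn f (Icc a b)) :
    StrictMonoOn f (Iic b) := by
  intro u hu v hv huv
  rcases le_or_gt v a with hva | hva
  · exact h1 (le_trans huv.le hva) hva huv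
  · rcases lt_or_ge u a with hua | hua
    · calc f u < f a := h1 hua.le self_mem_Iic hua
      _ < f v := h2 ⟨le_rfl, le_trans hva.le hv⟩ ⟨hva.le, hv⟩ hva
    · exact h2 ⟨hua, le_trans huv.le hv⟩ ⟨le_trans hua huv.le, hv⟩ huv

lemma sm_glue {f : ℝ → ℝ} {a : ℝ}
    (h1 : StrictMonoOn f (Iic a)) (h2 : StrictMonoOn f (Ici a)) : StrictMono f := by
  intro u v huv
  rcases le_or_gt v a with hva | hva
  · exact h1 (le_trans huv.le hva) hva huv
  · rcases lt_or_ge u a with hua | hua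
    · calc f u < f a := h1 hua.le self_mem_Iic hua
      _ < f v := h2 self_mem_Ici hva.le hva
    · exact h2 hua (le_trans hua huv.le) huv

/-- the basic bump element of F : identity, slope 2^k, translation, slope 2^(-k), identity -/
def bump (c w e : ℝ) (k : ℤ) (u : ℝ) : ℝ :=
  if u ≤ c then u
  else if u ≤ c + w then c + 2^k * (u - c)
  else if u ≤ e then u + (2^k - 1) * w
  else if u ≤ e + 2^k * w then e + (2^k - 1) * w + 2^(-k) * (u - e)
  else u

section Bump
variable {c w e : ℝ} {k : ℤ}
variable (hw0 : 0 < w) (hce : c + w ≤ e) (hk : 1 ≤ k)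

lemma E1 : (2:ℝ)^k * 2^(-k) = 1 := by
  rw [← zpow_add₀ (by norm_num : (2:ℝ) ≠ 0)]; norm_num

include hw0 hce hk

lemma bump_eq1 {u : ℝ} (h : u ≤ c) : bump c w e k u = u := by
  rw [bump, if_pos h]

lemma bump_eq2 {u : ℝ} (h1 : c ≤ u) (h2 : u ≤ c + w) : bump c w e k u = c + 2^k * (u - c) := by
  rcases le_or_gt u c with h | h
  · have : u = c := le_antisymm h h1
    rw [bump, if_pos h, this]; ring
  · rw [bump, if_neg (not_le.mpr h), if_pos h2]

lemma bump_eq3 {u : ℝ} (h1 : c + w ≤ u) (h2 : u ≤ e) :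
    bump c w e k u = u + (2^k - 1) * w := by
  have hc : ¬ u ≤ c := by intro h; linarith
  rcases le_or_gt u (c + w) with h | h
  · have : u = c + w := le_antisymm h h1
    rw [bump, if_neg hc, if_pos h, this]; ring
  · rw [bump, if_neg hc, if_neg (not_le.mpr h), if_pos h2]

lemma bump_eq4 {u : ℝ} (h1 : e ≤ u) (h2 : u ≤ e + 2^k * w) :
    bump c w e k u = e + (2^k - 1) * w + 2^(-k) * (u - e) := by
  have hc : ¬ u ≤ c := by intro h; linarith
  rcases le_or_gt u e with h | h
  · have hu : u = e := le_antisymm h h1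
    rcases le_or_gt u (c + w) with h' | h'
    · have hcw : u = c + w := le_antisymm h' (by linarith)
      have he2 : e = c + w := by rw [← hu, hcw]
      rw [bump, if_neg hc, if_pos h', hu, he2]; ring
    · rw [bump, if_neg hc, if_neg (not_le.mpr h'), if_pos h, hu]; ring
  · have hcw : ¬ u ≤ c + w := by intro h'; linarith
    rw [bump, if_neg hc, if_neg hcw, if_neg (not_le.mpr h), if_pos h2]

lemma bump_eq5 {u : ℝ} (h1 : e + 2^k * w ≤ u) : bump c w e k u = u := by
  have hkw : 0 < 2^k * w := mul_pos (two_zpow_pos k) hw0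
  have hc : ¬ u ≤ c := by intro h; linarith
  have hcw : ¬ u ≤ c + w := by intro h; linarith
  have he' : ¬ u ≤ e := by intro h; linarith
  rcases le_or_gt u (e + 2^k * w) with h | h
  · have hu : u = e + 2^k * w := le_antisymm h h1
    rw [bump, if_neg hc, if_neg hcw, if_neg he', if_pos h, hu]
    linear_combination w * (E1 (k := k))
  · rw [bump, if_neg hc, if_neg hcw, if_neg he', if_neg (not_le.mpr h)]

lemma bump_mono : StrictMono (bump c w e k) := by
  have hkw : 0 < 2^k * w := mul_pos (two_zpow_pos k) hw0
  have p1 : StrictMonoOn (bump c w e k) (Iic c) := by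
    intro u hu v hv huv
    rw [bump_eq1 hw0 hce hk hu, bump_eq1 hw0 hce hk hv]; exact huv
  have p2 : StrictMonoOn (bump c w e k) (Icc c (c+w)) := by
    intro u hu v hv huv
    rw [bump_eq2 hw0 hce hk hu.1 hu.2, bump_eq2 hw0 hce hk hv.1 hv.2]
    have := mul_lt_mul_of_pos_left (show u - c < v - c by linarith) (two_zpow_pos k)
    linarith
  have p3 : StrictMonoOn (bump c w e k) (Icc (c+w) e) := by
    intro u hu v hv huv
    rw [bump_eq3 hw0 hce hk hu.1 hu.2, bump_eq3 hw0 hce hk hv.1 hv.2]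
    linarith
  have p4 : StrictMonoOn (bump c w e k) (Icc e (e + 2^k*w)) := by
    intro u hu v hv huv
    rw [bump_eq4 hw0 hce hk hu.1 hu.2, bump_eq4 hw0 hce hk hv.1 hv.2]
    have := mul_lt_mul_of_pos_left (show u - e < v - e by linarith) (two_zpow_pos (-k))
    linarith
  have p5 : StrictMonoOn (bump c w e k) (Ici (e + 2^k*w)) := by
    intro u hu v hv huv
    rw [bump_eq5 hw0 hce hk hu, bump_eq5 hw0 hce hk hv]; exact huv
  exact sm_glue (smOn_Iic_glue (smOn_Iic_glue (smOn_Iic_glue p1 p2) p3) p4) p5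

lemma bump_surj : Function.Surjective (bump c w e k) := by
  have hkw : 0 < 2^k * w := mul_pos (two_zpow_pos k) hw0
  have hE1 : (2:ℝ)^k * 2^(-k) = 1 := E1
  intro y
  rcases le_or_gt y c with h1 | h1
  · exact ⟨y, bump_eq1 hw0 hce hk h1⟩
  rcases le_or_gt y (c + 2^k * w) with h2 | h2
  · refine ⟨c + 2^(-k) * (y - c), ?_⟩
    have hy1 : (0:ℝ) ≤ 2^(-k) * (y - c) := mul_nonneg (two_zpow_pos _).le (by linarith)
    have hy2 : 2^(-k) * (y - c) ≤ w := by
      have := mul_le_mul_of_nonneg_left (show y - c ≤ 2^k * w by linarith) (two_zpow_pos (-k)).le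
      calc 2^(-k) * (y - c) ≤ 2^(-k) * (2^k * w) := this
      _ = w := by rw [← mul_assoc]; linear_combination w * hE1
    rw [bump_eq2 hw0 hce hk (by linarith) (by linarith)]
    linear_combination (y - c) * hE1
  rcases le_or_gt y (e + (2^k - 1) * w) with h3 | h3
  · refine ⟨y - (2^k - 1) * w, ?_⟩
    rw [bump_eq3 hw0 hce hk (by linarith) (by linarith)]
    ring
  rcases le_or_gt y (e + 2^k * w) with h4 | h4
  · refine ⟨e + 2^k * (y - e - (2^k - 1) * w), ?_⟩
    have hy1 : (0:ℝ) ≤ 2^k * (y - e - (2^k - 1) * w) :=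
      mul_nonneg (two_zpow_pos _).le (by linarith)
    have hy2 : 2^k * (y - e - (2^k - 1) * w) ≤ 2^k * w := by
      apply mul_le_mul_of_nonneg_left _ (two_zpow_pos k).le
      linarith
    rw [bump_eq4 hw0 hce hk (by linarith) (by linarith)]
    linear_combination (y - e - (2^k - 1) * w) * hE1
  · exact ⟨y, bump_eq5 hw0 hce hk (by linarith)⟩

end Bump
end Dy

namespace Dy
open Set

lemma bump_thompson {c w e : ℝ} {k : ℤ}
    (hc : IsDyadic c) (hw : IsDyadic w) (he : IsDyadic e)
    (hw0 : 0 < w) (hce : c + w ≤ e) (hk : 1 ≤ k) :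
    IsThompsonF (bump c w e k) := by
  have hkw : 0 < 2^k * w := mul_pos (two_zpow_pos k) hw0
  have hE1 : (2:ℝ)^k * 2^(-k) = 1 := E1
  have hk0 : k ≠ 0 := by omega
  have hkneg : k ≠ -k := by omega
  have hnode4 : IsDyadic (e + 2^k * w) := dyadic_add he (dyadic_mul (dyadic_zpow k) hw)
  have E2 : ∀ {u : ℝ}, c ≤ u → u ≤ c + w → bump c w e k u = c + 2^k * (u - c) :=
    fun h1 h2 => bump_eq2 hw0 hce hk h1 h2
  have E3 : ∀ {u : ℝ}, c + w ≤ u → u ≤ e → bump c w e k u = u + (2^k - 1) * w :=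
    fun h1 h2 => bump_eq3 hw0 hce hk h1 h2
  have E4 : ∀ {u : ℝ}, e ≤ u → u ≤ e + 2^k * w →
      bump c w e k u = e + (2^k - 1) * w + 2^(-k) * (u - e) :=
    fun h1 h2 => bump_eq4 hw0 hce hk h1 h2
  have E5 : ∀ {u : ℝ}, e + 2^k * w ≤ u → bump c w e k u = u :=
    fun h1 => bump_eq5 hw0 hce hk h1
  have E1' : ∀ {u : ℝ}, u ≤ c → bump c w e k u = u :=
    fun h1 => bump_eq1 hw0 hce hk h1
  refine mk_thompson ⟨⟨(bump_mono hw0 hce hk).injective, bump_surj hw0 hce hk⟩,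
    bump_mono hw0 hce hk, ?_⟩ ⟨c, 0, fun t ht => by rw [E1' ht]; norm_num⟩
    ⟨e + 2^k * w, 0, fun t ht => by rw [E5 ht]; norm_num⟩
  intro t
  rcases lt_trichotomy t c with h1 | h1 | h1
  · refine ⟨c - t, 0, 0, by linarith, ?_, ?_, fun h => absurd rfl h⟩
    · intro s hs1 hs2
      rw [E1' (by linarith), E1' (le_of_lt h1), zpow_zero]; ring
    · intro s hs1 hs2
      rw [E1' (by linarith), E1' (le_of_lt h1), zpow_zero]; ring
  · subst h1
    refine ⟨w, 0, k, hw0, ?_, ?_, fun _ => hc⟩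
    · intro s hs1 hs2
      rw [E1' hs2, E1' le_rfl, zpow_zero]; ring
    · intro s hs1 hs2
      rw [E2 hs1 hs2, E1' le_rfl]
  rcases lt_trichotomy t (c + w) with h2 | h2 | h2
  · refine ⟨min (t - c) (c + w - t), k, k, lt_min (by linarith) (by linarith), ?_, ?_,
      fun h => absurd rfl h⟩
    · intro s hs1 hs2
      have := min_le_left (t - c) (c + w - t)
      rw [E2 (by linarith) (by linarith), E2 (le_of_lt h1) (le_of_lt h2)]; ring
    · intro s hs1 hs2
      have := min_le_right (t - c) (c + w - t)
      rw [E2 (by linarith) (by linarith), E2 (le_of_lt h1) (le_of_lt h2)]; ring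
  · subst h2
    rcases eq_or_lt_of_le hce with hE | hE
    · -- e = c + w : slopes k then -k
      refine ⟨min w (2^k * w), k, -k, lt_min hw0 hkw, ?_, ?_, fun _ => dyadic_add hc hw⟩
      · intro s hs1 hs2
        have := min_le_left w (2^k * w)
        rw [E2 (by linarith) (by linarith), E2 (by linarith) le_rfl]; ring
      · intro s hs1 hs2
        have := min_le_right w (2^k * w)
        rw [E4 (by linarith [hE]) (by rw [← hE]; linarith),
          E4 (by linarith [hE]) (by linarith [hkw])]
        ring
    · -- c + w < e : slopes k then 0
      refine ⟨min w (e - (c + w)), k, 0,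
        lt_min hw0 (by linarith), ?_, ?_, fun _ => dyadic_add hc hw⟩
      · intro s hs1 hs2
        have := min_le_left w (e - (c + w))
        rw [E2 (by linarith) (by linarith), E2 (by linarith) le_rfl]; ring
      · intro s hs1 hs2
        have := min_le_right w (e - (c + w))
        rw [E3 hs1 (by linarith), E3 le_rfl (by linarith), zpow_zero]; ring
  rcases lt_trichotomy t e with h3 | h3 | h3
  · refine ⟨min (t - (c + w)) (e - t), 0, 0, lt_min (by linarith) (by linarith), ?_, ?_,
      fun h => absurd rfl h⟩
    · intro s hs1 hs2
      have := min_le_left (t - (c + w)) (e - t)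
      rw [E3 (by linarith) (by linarith), E3 (by linarith) (le_of_lt h3), zpow_zero]; ring
    · intro s hs1 hs2
      have := min_le_right (t - (c + w)) (e - t)
      rw [E3 (by linarith) (by linarith), E3 (by linarith) (le_of_lt h3), zpow_zero]; ring
  · subst h3
    refine ⟨min (t - (c + w)) (2^k * w), 0, -k, lt_min (by linarith) hkw, ?_, ?_, fun _ => he⟩
    · intro s hs1 hs2
      have := min_le_left (t - (c + w)) (2^k * w)
      rw [E3 (by linarith) hs2, E3 (by linarith) le_rfl, zpow_zero]; ring
    · intro s hs1 hs2
      have := min_le_right (t - (c + w)) (2^k * w)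
      rw [E4 hs1 (by linarith), E4 le_rfl (by linarith)]; ring
  rcases lt_trichotomy t (e + 2^k * w) with h4 | h4 | h4
  · refine ⟨min (t - e) (e + 2^k * w - t), -k, -k, lt_min (by linarith) (by linarith), ?_, ?_,
      fun h => absurd rfl h⟩
    · intro s hs1 hs2
      have := min_le_left (t - e) (e + 2^k * w - t)
      rw [E4 (by linarith) (by linarith), E4 (le_of_lt h3) (le_of_lt h4)]; ring
    · intro s hs1 hs2
      have := min_le_right (t - e) (e + 2^k * w - t)
      rw [E4 (by linarith) (by linarith), E4 (le_of_lt h3) (le_of_lt h4)]; ring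
  · subst_vars
    refine ⟨min (2^k * w) 1, -k, 0, lt_min hkw one_pos, ?_, ?_, fun _ => hnode4⟩
    · intro s hs1 hs2
      have := min_le_left ((2:ℝ)^k * w) 1
      rw [E4 (by linarith) (by linarith), E5 le_rfl]
      linear_combination w * hE1
    · intro s hs1 hs2
      rw [E5 (by linarith), E5 le_rfl, zpow_zero]; ring
  · refine ⟨t - (e + 2^k * w), 0, 0, by linarith, ?_, ?_, fun h => absurd rfl h⟩
    · intro s hs1 hs2
      rw [E5 (by linarith), E5 (le_of_lt h4), zpow_zero]; ring
    · intro s hs1 hs2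
      rw [E5 (by linarith), E5 (le_of_lt h4), zpow_zero]; ring

end Dy

namespace Dy

/-- reachability by an element of F which is the identity below `p` -/
def Reach (p x y : ℝ) : Prop :=
  ∃ h : ℝ → ℝ, IsThompsonF h ∧ (∀ u : ℝ, u ≤ p → h u = u) ∧ h x = y

lemma Reach.refl (p x : ℝ) : Reach p x x :=
  ⟨fun u => u, id_thompson, fun _ _ => rfl, rfl⟩

lemma Reach.trans {p x y z : ℝ} (h1 : Reach p x y) (h2 : Reach p y z) : Reach p x z := by
  obtain ⟨f, hfT, hfid, hfx⟩ := h1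
  obtain ⟨g, hgT, hgid, hgy⟩ := h2
  exact ⟨g ∘ f, comp_thompson hgT hfT,
    fun u hu => by simp only [Function.comp_apply, hfid u hu, hgid u hu],
    by simp only [Function.comp_apply, hfx, hgy]⟩

lemma Reach.symm {p x y : ℝ} (h : Reach p x y) : Reach p y x := by
  obtain ⟨f, hfT, hfid, hfx⟩ := h
  obtain ⟨g, hgT, hgf, hfg⟩ := inv_thompson hfT
  refine ⟨g, hgT, fun u hu => ?_, by rw [← hfx, hgf]⟩
  conv_lhs => rw [← hfid u hu]
  exact hgf u

lemma Reach.gt {p x y : ℝ} (h : Reach p x y) (hx : p < x) : p < y := by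
  obtain ⟨f, hfT, hfid, hfx⟩ := h
  have hmono : StrictMono f := hfT.1.1.2.1
  have := hmono hx
  rwa [hfid p le_rfl, hfx] at this

lemma move_up {p δ z : ℝ} (hp : IsDyadic p) (hδ : IsDyadic δ) (hδ0 : 0 < δ)
    (hz : p + δ ≤ z) : Reach p z (z + δ) := by
  obtain ⟨e, he, hez, -⟩ := exists_dyadic_between (show z < z + 1 by linarith)
  refine ⟨bump p δ e 1, bump_thompson hp hδ he hδ0 (by linarith) le_rfl, ?_, ?_⟩
  · intro u hu; exact bump_eq1 hδ0 (by linarith) le_rfl hu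
  · rw [bump_eq3 hδ0 (by linarith) le_rfl hz (le_of_lt hez)]
    norm_num

lemma move_scale {p c x : ℝ} {k : ℤ} (hp : IsDyadic p) (hc : IsDyadic c)
    (hpc : p ≤ c) (hcx : c < x) (hk : 1 ≤ k) :
    Reach p x (c + 2^k * (x - c)) := by
  obtain ⟨w, hw, hw1, -⟩ := exists_dyadic_between (show x - c < x - c + 1 by linarith)
  have hw0 : 0 < w := lt_trans (by linarith) hw1
  refine ⟨bump c w (c + w) k, bump_thompson hc hw (dyadic_add hc hw) hw0 le_rfl hk, ?_, ?_⟩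
  · intro u hu; exact bump_eq1 hw0 le_rfl hk (by linarith)
  · exact bump_eq2 hw0 le_rfl hk (le_of_lt hcx) (by linarith)

lemma reach_translate_aux {p : ℝ} (hp : IsDyadic p) :
    ∀ n : ℕ, ∀ z δ : ℝ, p < z → 0 < δ → IsDyadic δ → δ ≤ 2^n * (z - p) →
      Reach p z (z + δ) := by
  intro n
  induction n with
  | zero =>
    intro z δ hz hδ0 hδ hle
    rw [pow_zero, one_mul] at hle
    exact move_up hp hδ hδ0 (by linarith)
  | succ n IH =>
    intro z δ hz hδ0 hδ hle
    have hδ2 : IsDyadic (δ/2) := by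
      have : δ/2 = 2^(-1:ℤ) * δ := by rw [zpow_neg, zpow_one]; ring
      rw [this]; exact dyadic_mul (dyadic_zpow _) hδ
    have h2n : (0:ℝ) ≤ 2^n := by positivity
    have hle1 : δ/2 ≤ 2^n * (z - p) := by
      rw [pow_succ] at hle; nlinarith
    have R1 : Reach p z (z + δ/2) := IH z (δ/2) hz (by linarith) hδ2 hle1
    have hz2 : p < z + δ/2 := by linarith
    have hle2 : δ/2 ≤ 2^n * (z + δ/2 - p) := by nlinarith
    have R2 : Reach p (z + δ/2) (z + δ/2 + δ/2) :=
      IH (z + δ/2) (δ/2) hz2 (by linarith) hδ2 hle2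
    have : z + δ/2 + δ/2 = z + δ := by ring
    rw [this] at R2
    exact R1.trans R2

lemma reach_of_translate {p z y : ℝ} (hp : IsDyadic p) (hz : p < z) (hy : p < y)
    (hd : IsDyadic (y - z)) : Reach p z y := by
  rcases lt_trichotomy z y with h | h | h
  · obtain ⟨n, hn⟩ := pow_unbounded_of_one_lt ((y - z)/(z - p)) (one_lt_two (α := ℝ))
    have h1 : y - z ≤ 2^n * (z - p) := by
      rw [div_lt_iff₀ (by linarith)] at hn
      linarith
    have := reach_translate_aux hp n z (y - z) hz (by linarith) hd h1
    have he : z + (y - z) = y := by ring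
    rwa [he] at this
  · subst h; exact Reach.refl p z
  · have hd' : IsDyadic (z - y) := by
      have : z - y = -(y - z) := by ring
      rw [this]; exact dyadic_neg hd
    obtain ⟨n, hn⟩ := pow_unbounded_of_one_lt ((z - y)/(y - p)) (one_lt_two (α := ℝ))
    have h1 : z - y ≤ 2^n * (y - p) := by
      rw [div_lt_iff₀ (by linarith)] at hn
      linarith
    have := reach_translate_aux hp n y (z - y) hy (by linarith) hd' h1
    have he : y + (z - y) = z := by ring
    rw [he] at this
    exact this.symm

lemma reach_of_rel_pos {p x y : ℝ} {a : ℤ} {d : ℝ} (hp : IsDyadic p) (hx : p < x)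
    (hy : p < y) (ha : 1 ≤ a) (hd : IsDyadic d) (hform : y = 2^a * x + d) :
    Reach p x y := by
  obtain ⟨c, hc, hc1, hc2⟩ := exists_dyadic_between hx
  have R1 : Reach p x (c + 2^a * (x - c)) := move_scale hp hc (le_of_lt hc1) hc2 ha
  set z := c + 2^a * (x - c) with hzdef
  have hz : p < z := R1.gt hx
  have hdz : IsDyadic (y - z) := by
    have : y - z = d + (2^a - 1) * c := by rw [hform, hzdef]; ring
    rw [this]
    exact dyadic_add hd (dyadic_mul (dyadic_sub (dyadic_zpow a) (by exact_mod_cast dyadic_intCast 1)) hc)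
  exact R1.trans (reach_of_translate hp hz hy hdz)

lemma reach_of_rel {p x y : ℝ} (hp : IsDyadic p) (hx : p < x) (hy : p < y)
    (hrel : Rel x y) : Reach p x y := by
  obtain ⟨a, d, hd, hform⟩ := hrel
  rcases lt_trichotomy a 0 with ha | ha | ha
  · -- use the symmetric form
    have h2a : (2:ℝ)^a ≠ 0 := ne_of_gt (two_zpow_pos a)
    have hform' : x = 2^(-a) * y + (-(2^(-a) * d)) := by
      rw [hform, zpow_neg]; field_simp; ring
    have hd' : IsDyadic (-(2^(-a) * d)) := dyadic_neg (dyadic_mul (dyadic_zpow _) hd)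
    exact (reach_of_rel_pos hp hy hx (by omega) hd' hform').symm
  · subst ha
    rw [zpow_zero, one_mul] at hform
    exact reach_of_translate hp hx hy (by rw [hform]; simpa using hd)
  · exact reach_of_rel_pos hp hx hy (by omega) hd hform

end Dy

open Dy

/-- **Statement 15** (Simultaneous transitivity). For dyadic `η < ζ` and two strictly
increasing finite sequences of rationals in `(η, ζ)`, there is a single `g ∈ F` with
`g(αᵢ) = βᵢ` for all `i` if and only if for each `i` separately some `gᵢ ∈ F` has
`gᵢ(αᵢ) = βᵢ`. -/
theorem simultaneous_transitivity (η ζ : ℝ) (hη : IsDyadic η) (hζ : IsDyadic ζ)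
    (hηζ : η < ζ) (r : ℕ) (α β : Fin r → ℚ)
    (hαmono : StrictMono α) (hβmono : StrictMono β)
    (hα : ∀ i, η < (α i : ℝ) ∧ (α i : ℝ) < ζ)
    (hβ : ∀ i, η < (β i : ℝ) ∧ (β i : ℝ) < ζ) :
    (∃ g : ℝ → ℝ, IsThompsonF g ∧ ∀ i, g (α i : ℝ) = (β i : ℝ)) ↔
      ∀ i, ∃ gi : ℝ → ℝ, IsThompsonF gi ∧ gi (α i : ℝ) = (β i : ℝ) := by
  constructor
  · rintro ⟨g, hgT, hg⟩ i
    exact ⟨g, hgT, hg i⟩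
  · intro h
    have hrel : ∀ i, Rel ((α i : ℝ)) ((β i : ℝ)) := by
      intro i
      obtain ⟨gi, hgiT, hgix⟩ := h i
      have := rel_apply hgiT ((α i : ℝ))
      rwa [hgix] at this
    have claim : ∀ n : ℕ, n ≤ r →
        ∃ g : ℝ → ℝ, IsThompsonF g ∧ ∀ i : Fin r, (i : ℕ) < n → g (α i : ℝ) = (β i : ℝ) := by
      intro n
      induction n with
      | zero => exact fun _ => ⟨fun u => u, id_thompson, fun i hi => absurd hi (Nat.not_lt_zero _)⟩
      | succ n IH =>
        intro hn
        obtain ⟨g, hgT, hg⟩ := IH (by omega)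
        have hgmono : StrictMono g := hgT.1.1.2.1
        set i0 : Fin r := ⟨n, by omega⟩ with hi0
        set x := g ((α i0 : ℝ)) with hx
        have hrel2 : Rel x ((β i0 : ℝ)) :=
          Rel.trans (Rel.symm (rel_apply hgT ((α i0 : ℝ)))) (hrel i0)
        -- find a dyadic p below x and β i0 but above all earlier β i
        have hp : ∃ p : ℝ, IsDyadic p ∧ p < x ∧ p < (β i0 : ℝ) ∧
            ∀ i : Fin r, (i : ℕ) < n → (β i : ℝ) < p := by
          rcases Nat.eq_zero_or_pos n with hn0 | hn0
          · obtain ⟨p, hpd, hp1, hp2⟩ :=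
              exists_dyadic_between (show min x ((β i0 : ℝ)) - 1 < min x ((β i0 : ℝ)) by linarith)
            exact ⟨p, hpd, lt_of_lt_of_le hp2 (min_le_left _ _),
              lt_of_lt_of_le hp2 (min_le_right _ _), fun i hi => by omega⟩
          · set i1 : Fin r := ⟨n - 1, by omega⟩ with hi1
            have hi1lt : i1 < i0 := by simp [hi0, hi1, Fin.lt_def]; omega
            have hb1 : ((β i1 : ℝ)) < (β i0 : ℝ) := by
              exact_mod_cast hβmono hi1lt
            have ha1 : ((α i1 : ℝ)) < (α i0 : ℝ) := by
              exact_mod_cast hαmono hi1lt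
            have hb1x : ((β i1 : ℝ)) < x := by
              have := hgmono ha1
              rwa [hg i1 (by simp [hi1]; omega)] at this
            obtain ⟨p, hpd, hp1, hp2⟩ :=
              exists_dyadic_between (show ((β i1 : ℝ)) < min x ((β i0 : ℝ)) from
                lt_min hb1x hb1)
            refine ⟨p, hpd, lt_of_lt_of_le hp2 (min_le_left _ _),
              lt_of_lt_of_le hp2 (min_le_right _ _), fun i hi => ?_⟩
            have : (β i : ℝ) ≤ (β i1 : ℝ) := by
              rcases eq_or_lt_of_le (show i ≤ i1 by simp [hi1, Fin.le_def]; omega) with he | hl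
              · rw [he]
              · exact le_of_lt (by exact_mod_cast hβmono hl)
            linarith
        obtain ⟨p, hpd, hpx, hpβ, hpall⟩ := hp
        obtain ⟨m, hmT, hmid, hmx⟩ := reach_of_rel hpd hpx hpβ hrel2
        refine ⟨m ∘ g, comp_thompson hmT hgT, fun i hi => ?_⟩
        rcases Nat.lt_or_ge (i : ℕ) n with hlt | hge
        · simp only [Function.comp_apply, hg i hlt]
          exact hmid _ (le_of_lt (hpall i hlt))
        · have : i = i0 := by
            apply Fin.ext; simp [hi0]; omega
          subst this
          simp only [Function.comp_apply, ← hx, hmx]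
    obtain ⟨g, hgT, hg⟩ := claim r le_rfl
    exact ⟨g, hgT, fun i => hg i i.isLt⟩
end
end
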